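/- arXiv:2505.08169 — 4 statements merged into one kernel-verified Lean document; each statement's English description precedes it below -/
import Mathlib

section
/- Let B ⊂ R^n (n ≥ 2) be the closed unit ball centered at the origin O, and let E2 = λB with λ = √2. Then for every x on the sphere of radius √2, the intersection S(B,x) ∩ S(B,−x) of the support cones of B with apexes x and −x equals the intersection of the sphere of radius √2 with the hyperplane x^⊥ through O orthogonal to x. -/
open Set Metric Function Bornology
open scoped RealInnerProductSpace Pointwise

noncomputable section

/-- The cone generated by `K` with apex `x`: `{x + t • (w - x) : w ∈ K, t ≥ 0}`. -/
def cone {n : ℕ} (K : Set (EuclideanSpace ℝ (Fin n))) (x : EuclideanSpace ℝ (Fin n)) :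
    Set (EuclideanSpace ℝ (Fin n)) :=
  {p | ∃ w ∈ K, ∃ t : ℝ, 0 ≤ t ∧ p = x + t • (w - x)}

/-- The support cone `S(K,x)`: the boundary of the cone generated by `K` with apex `x`. -/
def supportCone {n : ℕ} (K : Set (EuclideanSpace ℝ (Fin n))) (x : EuclideanSpace ℝ (Fin n)) :
    Set (EuclideanSpace ℝ (Fin n)) :=
  frontier (cone K x)

/-- A convex body: compact, convex, with nonempty interior. -/
def IsConvexBody {n : ℕ} (K : Set (EuclideanSpace ℝ (Fin n))) : Prop :=
  IsCompact K ∧ Convex ℝ K ∧ (interior K).Nonempty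

/-- An ellipsoid: a nondegenerate affine image of the closed unit ball. -/
def IsEllipsoid {n : ℕ} (K : Set (EuclideanSpace ℝ (Fin n))) : Prop :=
  ∃ f : EuclideanSpace ℝ (Fin n) ≃ᵃ[ℝ] EuclideanSpace ℝ (Fin n), K = f '' closedBall 0 1

/-- `K` has the strong intersection property relative to `O` and `S` with associated body `G`. -/
def StrongIntersectionProperty {n : ℕ} (O : EuclideanSpace ℝ (Fin n))
    (K S G : Set (EuclideanSpace ℝ (Fin n))) : Prop :=
  ∀ x ∈ frontier S, ∃ y ∈ frontier S, x ≠ y ∧ Collinear ℝ {x, O, y} ∧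
    ∃ u : EuclideanSpace ℝ (Fin n), u ≠ 0 ∧
      supportCone K x ∩ supportCone K y = {p | ⟪u, p - O⟫ = 0} ∩ G

lemma cone_ball_eq {n : ℕ} (x : EuclideanSpace ℝ (Fin n)) (hx : ‖x‖ = Real.sqrt 2) :
    cone (closedBall (0 : EuclideanSpace ℝ (Fin n)) 1) x
      = {p | ‖p - x‖ ≤ ⟪-x, p - x⟫} := by
  have hx2 : ⟪x, x⟫ = 2 := by
    rw [real_inner_self_eq_norm_sq, hx, Real.sq_sqrt (by norm_num)]
  ext p
  constructor
  · rintro ⟨w, hw, t, ht, rfl⟩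
    simp only [mem_closedBall, dist_zero_right] at hw
    simp only [mem_setOf_eq, add_sub_cancel_left]
    rw [norm_smul, inner_smul_right, Real.norm_of_nonneg ht]
    apply mul_le_mul_of_nonneg_left _ ht
    have hsq : ‖w - x‖ ^ 2 = ‖w‖ ^ 2 - 2 * ⟪x, w⟫ + 2 := by
      rw [norm_sub_sq_real, real_inner_self_eq_norm_sq] at *
      rw [real_inner_comm w x]; linarith
    have hgoal : ⟪-x, w - x⟫ = 2 - ⟪x, w⟫ := by
      rw [inner_neg_left, inner_sub_right, hx2]; ring
    rw [hgoal]
    have haw : ⟪x, w⟫ ≤ Real.sqrt 2 := by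
      calc ⟪x, w⟫ ≤ ‖x‖ * ‖w‖ := real_inner_le_norm x w
        _ ≤ Real.sqrt 2 * 1 := by
            rw [hx]; exact mul_le_mul_of_nonneg_left hw (Real.sqrt_nonneg 2)
        _ = Real.sqrt 2 := mul_one _
    have h2 : Real.sqrt 2 ≤ 2 := by
      nlinarith [Real.sq_sqrt (show (0:ℝ) ≤ 2 by norm_num), Real.sqrt_nonneg 2]
    have hc : (0:ℝ) ≤ 2 - ⟪x, w⟫ := by linarith
    have hsq2 : ‖w - x‖ ^ 2 ≤ (2 - ⟪x, w⟫) ^ 2 := by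
      nlinarith [norm_nonneg w, sq_nonneg (⟪x, w⟫ - 1)]
    nlinarith [norm_nonneg (w - x)]
  · intro hp
    simp only [mem_setOf_eq] at hp
    by_cases hpx : p = x
    · exact ⟨0, by simp, 0, le_refl 0, by simp [hpx]⟩
    · set q := p - x with hq
      have hq0 : q ≠ 0 := sub_ne_zero.mpr hpx
      have hqn : 0 < ‖q‖ := norm_pos_iff.mpr hq0
      set s := ⟪-x, q⟫ with hs
      have hs0 : 0 < s := lt_of_lt_of_le hqn hp
      refine ⟨x + s⁻¹ • q, ?_, s, le_of_lt hs0, ?_⟩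
      · simp only [mem_closedBall, dist_zero_right]
        have hxq : ⟪x, q⟫ = -s := by rw [hs, inner_neg_left]; ring
        have hn2 : ‖x + s⁻¹ • q‖ ^ 2 = (s⁻¹ * ‖q‖) ^ 2 := by
          rw [norm_add_sq_real, inner_smul_right, norm_smul, hxq,
            Real.norm_of_nonneg (by positivity : (0:ℝ) ≤ s⁻¹), hx,
            Real.sq_sqrt (by norm_num : (0:ℝ) ≤ 2)]
          field_simp
          ring
        have h1 : (s⁻¹ * ‖q‖) ≤ 1 := by
          rw [inv_mul_le_iff₀ hs0, mul_one]; exact hp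
        nlinarith [norm_nonneg (x + s⁻¹ • q),
          mul_nonneg (inv_nonneg.mpr hs0.le) hqn.le]
      · rw [add_sub_cancel_left, smul_smul, mul_inv_cancel₀ (ne_of_gt hs0), one_smul]
        rw [hq]; abel

lemma frontier_halfcone {n : ℕ} (x : EuclideanSpace ℝ (Fin n)) (hx : ‖x‖ = Real.sqrt 2) :
    frontier {p : EuclideanSpace ℝ (Fin n) | ‖p - x‖ ≤ ⟪-x, p - x⟫}
      = {p | ‖p - x‖ = ⟪-x, p - x⟫} := by
  have hx2 : ⟪x, x⟫ = 2 := by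
    rw [real_inner_self_eq_norm_sq, hx, Real.sq_sqrt (by norm_num)]
  have hxn : (0:ℝ) < ‖x‖ := by rw [hx]; positivity
  have hcont1 : Continuous fun p : EuclideanSpace ℝ (Fin n) => ‖p - x‖ :=
    (continuous_id.sub continuous_const).norm
  have hcont2 : Continuous fun p : EuclideanSpace ℝ (Fin n) => ⟪-x, p - x⟫ :=
    continuous_const.inner (continuous_id.sub continuous_const)
  set C := {p : EuclideanSpace ℝ (Fin n) | ‖p - x‖ ≤ ⟪-x, p - x⟫} with hC
  have hclosed : IsClosed C := isClosed_le hcont1 hcont2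
  have hopen : IsOpen {p : EuclideanSpace ℝ (Fin n) | ‖p - x‖ < ⟪-x, p - x⟫} :=
    isOpen_lt hcont1 hcont2
  -- every boundary point (equality) is not in the interior
  have hnotint : ∀ p, ‖p - x‖ = ⟪-x, p - x⟫ → p ∉ interior C := by
    intro p hpeq hpint
    rcases Metric.mem_nhds_iff.mp (mem_interior_iff_mem_nhds.mp hpint) with ⟨ε, hε, hball⟩
    by_cases hpx : p = x
    · -- perturb along x
      set δ : ℝ := ε / (2 * ‖x‖) with hδ
      have hδ0 : 0 < δ := by positivity
      have hmem : p + δ • x ∈ C := by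
        apply hball
        simp only [mem_ball, dist_self_add_left, norm_smul, Real.norm_of_nonneg hδ0.le]
        rw [hδ]
        calc ε / (2 * ‖x‖) * ‖x‖ = ε / 2 := by field_simp
          _ < ε := by linarith
      simp only [hC, mem_setOf_eq, hpx, add_sub_cancel_left] at hmem
      rw [norm_smul, inner_smul_right, Real.norm_of_nonneg hδ0.le, inner_neg_left, hx2] at hmem
      nlinarith
    · set q := p - x with hq
      have hq0 : q ≠ 0 := sub_ne_zero.mpr hpx
      have hqn : 0 < ‖q‖ := norm_pos_iff.mpr hq0
      have hxq : ⟪x, q⟫ = -‖q‖ := by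
        have := hpeq; rw [inner_neg_left] at this; linarith [this]
      set d : EuclideanSpace ℝ (Fin n) := x + ‖q‖⁻¹ • q with hd
      have hdn : ‖d‖ ≤ ‖x‖ + 1 := by
        calc ‖d‖ ≤ ‖x‖ + ‖‖q‖⁻¹ • q‖ := norm_add_le _ _
          _ = ‖x‖ + 1 := by
              rw [norm_smul, Real.norm_of_nonneg (by positivity), inv_mul_cancel₀ hqn.ne']
      set δ : ℝ := ε / (2 * (‖x‖ + 1)) with hδ
      have hδ0 : 0 < δ := by positivity
      have hmem : p + δ • d ∈ C := by
        apply hball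
        simp only [mem_ball, dist_self_add_left, norm_smul, Real.norm_of_nonneg hδ0.le]
        calc δ * ‖d‖ ≤ δ * (‖x‖ + 1) := by nlinarith
          _ = ε / 2 := by rw [hδ]; field_simp
          _ < ε := by linarith
      simp only [hC, mem_setOf_eq] at hmem
      have hsub : p + δ • d - x = q + δ • d := by rw [hq]; abel
      rw [hsub] at hmem
      -- LHS of hmem: ‖q + δ • d‖ ≥ ‖q‖ ; RHS: = ‖q‖ - δ
      have hrhs : ⟪-x, q + δ • d⟫ = ‖q‖ - δ := by
        simp only [hd, inner_add_right, inner_smul_right, inner_neg_left]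
        rw [hxq, hx2]
        field_simp
        ring
      have hlhs : ‖q‖ ≤ ‖q + δ • d‖ := by
        have h1 : ⟪‖q‖⁻¹ • q, q + δ • d⟫ ≤ ‖‖q‖⁻¹ • q‖ * ‖q + δ • d‖ :=
          real_inner_le_norm _ _
        have h2 : ‖‖q‖⁻¹ • q‖ = 1 := by
          rw [norm_smul, Real.norm_of_nonneg (by positivity), inv_mul_cancel₀ hqn.ne']
        have h3 : ⟪‖q‖⁻¹ • q, q + δ • d⟫ = ‖q‖ := by
          have hqx2 : ⟪q, x⟫ = -‖q‖ := by rw [real_inner_comm]; exact hxq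
          have hqq : ⟪q, q⟫ = ‖q‖ * ‖q‖ := real_inner_self_eq_norm_mul_norm q
          simp only [hd, inner_smul_left, inner_add_right, inner_smul_right, conj_trivial,
            hqx2, hqq]
          field_simp
          ring
        rw [h2, one_mul] at h1
        rw [h3] at h1
        exact h1
      linarith
  rw [hclosed.frontier_eq]
  ext p
  simp only [mem_diff, hC, mem_setOf_eq]
  constructor
  · rintro ⟨hle, hni⟩
    rcases lt_or_eq_of_le hle with hlt | heq
    · have hsint : {p : EuclideanSpace ℝ (Fin n) | ‖p - x‖ < ⟪-x, p - x⟫} ⊆ interior C :=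
        interior_maximal (fun r hr => show ‖r - x‖ ≤ ⟪-x, r - x⟫ from le_of_lt hr) hopen
      exact absurd (hsint hlt) hni
    · exact heq
  · intro heq
    exact ⟨le_of_eq heq, hnotint p heq⟩


lemma supportCone_ball_eq {n : ℕ} (x : EuclideanSpace ℝ (Fin n)) (hx : ‖x‖ = Real.sqrt 2) :
    supportCone (closedBall (0 : EuclideanSpace ℝ (Fin n)) 1) x
      = {p | ‖p - x‖ = ⟪-x, p - x⟫} := by
  rw [supportCone, cone_ball_eq x hx, frontier_halfcone x hx]

/-- For the unit ball `B` and an apex `x` with `‖x‖ = √2`, the intersection of the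
support cones from `x` and `-x` is exactly the central section of the sphere of
radius `√2` by the hyperplane orthogonal to `x`. -/
theorem stmt3 {n : ℕ} (hn : 2 ≤ n) (x : EuclideanSpace ℝ (Fin n))
    (hx : ‖x‖ = Real.sqrt 2) :
    supportCone (closedBall (0 : EuclideanSpace ℝ (Fin n)) 1) x ∩
        supportCone (closedBall (0 : EuclideanSpace ℝ (Fin n)) 1) (-x)
      = sphere (0 : EuclideanSpace ℝ (Fin n)) (Real.sqrt 2) ∩ {p | ⟪x, p⟫ = 0} := by

  have hnx : ‖-x‖ = Real.sqrt 2 := by rw [norm_neg, hx]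
  rw [supportCone_ball_eq x hx, supportCone_ball_eq (-x) hnx]
  have hx2 : ⟪x, x⟫ = 2 := by
    rw [real_inner_self_eq_norm_sq, hx, Real.sq_sqrt (by norm_num)]
  have hx22 : ‖x‖ ^ 2 = 2 := by rw [hx, Real.sq_sqrt (by norm_num : (0:ℝ) ≤ 2)]
  ext p
  simp only [mem_inter_iff, mem_setOf_eq, sub_neg_eq_add, neg_neg,
    mem_sphere_iff_norm, sub_zero]
  have hpx : ⟪p, x⟫ = ⟪x, p⟫ := real_inner_comm x p
  have e1 : ⟪-x, p - x⟫ = 2 - ⟪x, p⟫ := by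
    rw [inner_neg_left, inner_sub_right, hx2]; ring
  have e2 : ⟪x, p + x⟫ = ⟪x, p⟫ + 2 := by rw [inner_add_right, hx2]
  have s1 : ‖p - x‖ ^ 2 = ‖p‖ ^ 2 - 2 * ⟪x, p⟫ + 2 := by
    rw [norm_sub_sq_real, hpx, hx22]
  have s2 : ‖p + x‖ ^ 2 = ‖p‖ ^ 2 + 2 * ⟪x, p⟫ + 2 := by
    rw [norm_add_sq_real, hpx, hx22]
  rw [e1, e2]
  constructor
  · rintro ⟨h1, h2⟩
    have ha : ⟪x, p⟫ = 0 := by nlinarith [s1, s2, h1, h2]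
    have hb : ‖p‖ ^ 2 = 2 := by nlinarith [s1, h1, ha]
    exact ⟨by rw [← Real.sqrt_sq (norm_nonneg p), hb], ha⟩
  · rintro ⟨hb, ha⟩
    have hb2 : ‖p‖ ^ 2 = 2 := by rw [hb, Real.sq_sqrt (by norm_num : (0:ℝ) ≤ 2)]
    have h1 : ‖p - x‖ = 2 := by
      have : ‖p - x‖ ^ 2 = 2 ^ 2 := by rw [s1, ha, hb2]; ring
      rw [← Real.sqrt_sq (norm_nonneg (p - x)), this,
        Real.sqrt_sq (by norm_num : (0:ℝ) ≤ 2)]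
    have h2 : ‖p + x‖ = 2 := by
      have : ‖p + x‖ ^ 2 = 2 ^ 2 := by rw [s2, ha, hb2]; ring
      rw [← Real.sqrt_sq (norm_nonneg (p + x)), this,
        Real.sqrt_sq (by norm_num : (0:ℝ) ≤ 2)]
    constructor
    · rw [h1, ha]; ring
    · rw [h2, ha]; ring
end
end

section
/- Let B be the closed unit ball in R^n centered at O and let λ > √2. Then for every x with ‖x‖ = λ, the intersection S(B,x) ∩ S(B,−x) of the support cones with apexes x and −x is contained in the open ball of radius λ intersected with the hyperplane x^⊥; i.e., every point of S(B,x) ∩ S(B,−x) has norm strictly less than λ. -/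
open Set Metric Function Bornology
open scoped RealInnerProductSpace Pointwise

noncomputable section

lemma frontier_cone_subset {n : ℕ} (lam : ℝ) (hlam : Real.sqrt 2 < lam)
    (x : EuclideanSpace ℝ (Fin n)) (hx : ‖x‖ = lam) :
    frontier (cone (closedBall 0 1) x) ⊆
      {p | ⟪-x, p - x⟫ = Real.sqrt (lam^2 - 1) * ‖p - x‖} := by
  have hlam0 : 0 < lam := lt_of_le_of_lt (Real.sqrt_nonneg 2) hlam
  have h2 : (Real.sqrt 2)^2 = 2 := Real.sq_sqrt (by norm_num)
  have hlam2 : 2 < lam^2 := by nlinarith [Real.sqrt_nonneg 2]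
  set s : ℝ := Real.sqrt (lam^2 - 1) with hs
  have hs0 : 0 ≤ s := Real.sqrt_nonneg _
  have hs2 : s^2 = lam^2 - 1 := Real.sq_sqrt (by nlinarith)
  have hs1 : 1 < s := by nlinarith
  have hcont1 : Continuous fun p : EuclideanSpace ℝ (Fin n) => ⟪-x, p - x⟫ :=
    continuous_const.inner (continuous_id.sub continuous_const)
  have hcont2 : Continuous fun p : EuclideanSpace ℝ (Fin n) => s * ‖p - x‖ :=
    continuous_const.mul ((continuous_id.sub continuous_const).norm)
  -- step 1 : cone ⊆ {f ≥ 0}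
  have step1 : cone (closedBall 0 1) x ⊆ {p | s * ‖p - x‖ ≤ ⟪-x, p - x⟫} := by
    rintro p ⟨w, hw, t, ht, rfl⟩
    have hw1 : ‖w‖ ≤ 1 := by simpa [dist_eq_norm] using hw
    have hxw : ⟪x, w⟫ ≤ lam := by
      calc ⟪x, w⟫ ≤ ‖x‖ * ‖w‖ := real_inner_le_norm x w
        _ ≤ lam * 1 := by rw [hx]; exact mul_le_mul_of_nonneg_left hw1 hlam0.le
        _ = lam := mul_one lam
    have key : s * ‖w - x‖ ≤ ⟪-x, w - x⟫ := by
      have hin : ⟪-x, w - x⟫ = lam^2 - ⟪x, w⟫ := by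
        rw [inner_neg_left, inner_sub_right, real_inner_self_eq_norm_sq, hx]; ring
      have hb : 0 ≤ lam^2 - ⟪x, w⟫ := by nlinarith
      have hnw : ‖w - x‖^2 = ‖w‖^2 - 2*⟪x, w⟫ + lam^2 := by
        rw [norm_sub_sq_real, real_inner_comm, hx]
      have hsq : (s * ‖w - x‖)^2 ≤ (lam^2 - ⟪x, w⟫)^2 := by
        rw [mul_pow, hs2, hnw]
        have hw2 : ‖w‖^2 ≤ 1 := by nlinarith [norm_nonneg w]
        nlinarith [sq_nonneg (⟪x, w⟫ - 1), hw2]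
      rw [hin]
      nlinarith [hsq, hb, mul_nonneg hs0 (norm_nonneg (w - x))]
    simp only [Set.mem_setOf_eq, add_sub_cancel_left, inner_smul_right, norm_smul,
      Real.norm_eq_abs, abs_of_nonneg ht]
    calc s * (t * ‖w - x‖) = t * (s * ‖w - x‖) := by ring
      _ ≤ t * ⟪-x, w - x⟫ := mul_le_mul_of_nonneg_left key ht
  -- step 2 : {f > 0} ⊆ cone
  have step2 : {p : EuclideanSpace ℝ (Fin n) | s * ‖p - x‖ < ⟪-x, p - x⟫} ⊆
      cone (closedBall 0 1) x := by
    intro p hp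
    simp only [Set.mem_setOf_eq] at hp
    have hpx : p ≠ x := by
      rintro rfl
      simp at hp
    have hd : 0 < ‖p - x‖ := by
      rw [norm_pos_iff]; exact sub_ne_zero_of_ne hpx
    set d : ℝ := ‖p - x‖ with hdd
    set u : EuclideanSpace ℝ (Fin n) := d⁻¹ • (p - x) with hu
    have hu1 : ‖u‖ = 1 := by
      rw [hu, norm_smul, Real.norm_eq_abs, abs_of_nonneg (inv_nonneg.2 hd.le)]
      field_simp
      exact hdd.symm
    set r : ℝ := ⟪-x, u⟫ with hr
    have hrd : r * d = ⟪-x, p - x⟫ := by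
      rw [hr, hu, real_inner_smul_right]
      field_simp
    have hrs : s < r := by
      have : s * d < r * d := by rw [hrd]; exact hp
      exact lt_of_mul_lt_mul_right this hd.le
    have hr0 : 0 < r := lt_trans (lt_trans one_pos hs1) hrs
    refine ⟨x + r • u, ?_, d / r, div_nonneg hd.le hr0.le, ?_⟩
    · rw [mem_closedBall, dist_eq_norm, sub_zero]
      have hxu : ⟪x, u⟫ = -r := by rw [hr, inner_neg_left]; ring
      have hn : ‖x + r • u‖^2 = lam^2 - r^2 := by
        rw [norm_add_sq_real, inner_smul_right, hxu, norm_smul, hu1, hx,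
          Real.norm_eq_abs, abs_of_nonneg hr0.le]
        ring
      have hsqle : ‖x + r • u‖^2 ≤ 1 := by nlinarith
      nlinarith [norm_nonneg (x + r • u)]
    · have hc : d / r * r * d⁻¹ = 1 := by field_simp
      rw [add_sub_cancel_left, smul_smul, hu, smul_smul, hc, one_smul]
      abel
  intro p hp
  have hA : p ∈ {p : EuclideanSpace ℝ (Fin n) | s * ‖p - x‖ ≤ ⟪-x, p - x⟫} := by
    have hcl : IsClosed {p : EuclideanSpace ℝ (Fin n) | s * ‖p - x‖ ≤ ⟪-x, p - x⟫} :=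
      isClosed_le hcont2 hcont1
    exact hcl.closure_subset_iff.2 step1 hp.1
  have hU : p ∉ {p : EuclideanSpace ℝ (Fin n) | s * ‖p - x‖ < ⟪-x, p - x⟫} := by
    intro hcon
    have hop : IsOpen {p : EuclideanSpace ℝ (Fin n) | s * ‖p - x‖ < ⟪-x, p - x⟫} :=
      isOpen_lt hcont2 hcont1
    exact hp.2 (interior_maximal step2 hop hcon)
  simp only [Set.mem_setOf_eq] at hA hU ⊢
  linarith [lt_or_ge (s * ‖p - x‖) ⟪-x, p - x⟫ , hA]

theorem stmt4_aux {n : ℕ} (lam : ℝ) (hlam : Real.sqrt 2 < lam)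
    (x : EuclideanSpace ℝ (Fin n)) (hx : ‖x‖ = lam) :
    frontier (cone (closedBall (0 : EuclideanSpace ℝ (Fin n)) 1) x) ∩
        frontier (cone (closedBall (0 : EuclideanSpace ℝ (Fin n)) 1) (-x))
      ⊆ ball (0 : EuclideanSpace ℝ (Fin n)) lam ∩ {p | ⟪x, p⟫ = 0} := by
  have hlam0 : 0 < lam := lt_of_le_of_lt (Real.sqrt_nonneg 2) hlam
  have h2 : (Real.sqrt 2)^2 = 2 := Real.sq_sqrt (by norm_num)
  have hlam2 : 2 < lam^2 := by nlinarith [Real.sqrt_nonneg 2]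
  set s : ℝ := Real.sqrt (lam^2 - 1) with hs
  have hs0 : 0 ≤ s := Real.sqrt_nonneg _
  have hs2 : s^2 = lam^2 - 1 := Real.sq_sqrt (by nlinarith)
  rintro p ⟨hp1, hp2⟩
  have k1 := frontier_cone_subset lam hlam x hx hp1
  have k2 := frontier_cone_subset lam hlam (-x) (by rwa [norm_neg]) hp2
  simp only [Set.mem_setOf_eq, neg_neg, sub_neg_eq_add] at k1 k2
  set a : ℝ := ⟪x, p⟫ with ha
  have e1 : lam^2 - a = s * ‖p - x‖ := by
    rw [← k1, inner_neg_left, inner_sub_right, real_inner_self_eq_norm_sq, hx]; ring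
  have e2 : lam^2 + a = s * ‖p + x‖ := by
    rw [← k2, inner_add_right, real_inner_self_eq_norm_sq, hx]; ring
  have hn1 : ‖p - x‖^2 = ‖p‖^2 - 2*a + lam^2 := by
    rw [norm_sub_sq_real, real_inner_comm, hx, ← ha]
  have hn2 : ‖p + x‖^2 = ‖p‖^2 + 2*a + lam^2 := by
    rw [norm_add_sq_real, real_inner_comm, hx, ← ha]
  have sq1 : (lam^2 - a)^2 = (lam^2 - 1) * (‖p‖^2 - 2*a + lam^2) := by
    rw [e1, mul_pow, hs2, hn1]
  have sq2 : (lam^2 + a)^2 = (lam^2 - 1) * (‖p‖^2 + 2*a + lam^2) := by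
    rw [e2, mul_pow, hs2, hn2]
  have ha0 : a = 0 := by linear_combination (sq2 - sq1) / 4
  rw [ha0] at sq2
  have hnp : (lam^2 - 1) * ‖p‖^2 = lam^2 := by linear_combination -sq2
  refine ⟨?_, ha0⟩
  rw [mem_ball, dist_eq_norm, sub_zero]
  have hlt : ‖p‖^2 < lam^2 := by nlinarith [hnp, hlam2, sq_nonneg lam]
  nlinarith [norm_nonneg p, hlt, hlam0]

/-- For the unit ball `B` and an apex `x` with `‖x‖ = λ > √2`, the intersection of the
support cones from `x` and `-x` lies in the open ball of radius `λ` intersected with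
the hyperplane orthogonal to `x`. -/
theorem stmt4 {n : ℕ} (lam : ℝ) (hlam : Real.sqrt 2 < lam)
    (x : EuclideanSpace ℝ (Fin n)) (hx : ‖x‖ = lam) :
    supportCone (closedBall (0 : EuclideanSpace ℝ (Fin n)) 1) x ∩
        supportCone (closedBall (0 : EuclideanSpace ℝ (Fin n)) 1) (-x)
      ⊆ ball (0 : EuclideanSpace ℝ (Fin n)) lam ∩ {p | ⟪x, p⟫ = 0} := by
  intro p hp
  exact stmt4_aux lam hlam x hx hp
end
end

section
/- Let K ⊂ R^n (n ≥ 2) be a convex body and O an interior point of K. If every chord of K through O is a diametral chord (i.e., K has parallel supporting hyperplanes at the two endpoints of each such chord), then K is centrally symmetric with center O. -/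
open Set Metric Function Bornology
open scoped RealInnerProductSpace Pointwise

noncomputable section

private lemma hammer_sin_approx {h : ℝ} (hh : |h| ≤ 1) : |Real.sin h - h| ≤ |h|^3 := by
  rcases lt_trichotomy h 0 with hneg | rfl | hpos
  · have h1 : 0 < -h := by linarith
    have h2 : -h ≤ 1 := by rw [abs_of_neg hneg] at hh; linarith
    have ha := Real.sin_lt h1
    have hb := Real.sin_gt_sub_cube h1
    rw [Real.sin_neg] at ha hb
    rw [abs_of_neg hneg, abs_le]
    constructor
    · nlinarith
    · nlinarith
  · simp
  · have h2 : h ≤ 1 := by rw [abs_of_pos hpos] at hh; linarith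
    have ha := Real.sin_lt hpos
    have hb := Real.sin_gt_sub_cube hpos
    rw [abs_of_pos hpos, abs_le]
    constructor
    · nlinarith
    · nlinarith

private lemma hammer_log_lb {u : ℝ} (h1 : |u| ≤ 1/2) : u - 2*u^2 ≤ Real.log (1+u) := by
  obtain ⟨hl, hr⟩ := abs_le.mp h1
  have hpos : (0:ℝ) < 1 + u := by linarith
  rw [Real.le_log_iff_exp_le hpos]
  have ha : 1 - u + 2*u^2 ≤ Real.exp (-(u - 2*u^2)) := by
    have := Real.add_one_le_exp (-(u - 2*u^2)); linarith
  have hb : (0:ℝ) < 1 - u + 2*u^2 := by nlinarith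
  have hexp : (0:ℝ) < Real.exp (u - 2*u^2) := Real.exp_pos _
  have hc : Real.exp (u - 2*u^2) * (1 - u + 2*u^2) ≤ 1 := by
    have h0 : Real.exp (u - 2*u^2) * (1 - u + 2*u^2) ≤
        Real.exp (u - 2*u^2) * Real.exp (-(u - 2*u^2)) :=
      mul_le_mul_of_nonneg_left ha (le_of_lt hexp)
    rwa [← Real.exp_add, add_neg_cancel, Real.exp_zero] at h0
  have hd : (1:ℝ) ≤ (1+u) * (1 - u + 2*u^2) := by nlinarith
  nlinarith [mul_pos hexp hb]

set_option maxHeartbeats 1000000 in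
private lemma hammer_lemT {ρ s h : ℝ} (hρ0 : 0 < ρ) (hρ1 : ρ ≤ 1) (hs : |s| ≤ 1/ρ)
    (hh : |h| ≤ ρ/4) :
    (1/4 : ℝ) ≤ Real.cos h + s * Real.sin h ∧
      s*h - (9/ρ^2)*h^2 ≤ Real.log (Real.cos h + s * Real.sin h) := by
  have hρinv : (0:ℝ) < 1/ρ := by positivity
  have hs0 : 0 ≤ |s| := abs_nonneg s
  have hh0 : 0 ≤ |h| := abs_nonneg h
  have hh1 : |h| ≤ 1 := by nlinarith
  have hsh : |s| * |h| ≤ 1/4 := by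
    calc |s| * |h| ≤ (1/ρ) * (ρ/4) := by
          apply mul_le_mul hs hh hh0 (le_of_lt hρinv)
      _ = 1/4 := by field_simp
  have hcos := Real.one_sub_sq_div_two_le_cos (x := h)
  have hcos1 := Real.cos_le_one h
  have hsin := hammer_sin_approx hh1
  obtain ⟨hsl, hsr⟩ := abs_le.mp hsin
  have habs_h : |h|^2 = h^2 := sq_abs h
  have habs3 : |h|^3 = h^2 * |h| := by rw [pow_succ, sq_abs]
  set u : ℝ := Real.cos h + s * Real.sin h - 1 with hu
  have key1 : |u - s*h| ≤ (3/4) * h^2 := by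
    have e1 : u - s*h = (Real.cos h - 1) + s * (Real.sin h - h) := by rw [hu]; ring
    rw [e1]
    have b1 : |Real.cos h - 1| ≤ h^2/2 := by
      rw [abs_le]
      constructor
      · nlinarith
      · nlinarith
    have b2 : |s * (Real.sin h - h)| ≤ h^2/4 := by
      rw [abs_mul]
      have hb2 : |Real.sin h - h| ≤ h^2 * |h| := by rw [← habs3]; exact hsin
      calc |s| * |Real.sin h - h| ≤ |s| * (h^2 * |h|) :=
            mul_le_mul_of_nonneg_left hb2 hs0
        _ = (|s| * |h|) * h^2 := by ring
        _ ≤ (1/4) * h^2 := by nlinarith [sq_nonneg h]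
        _ = h^2/4 := by ring
    calc |(Real.cos h - 1) + s * (Real.sin h - h)|
        ≤ |Real.cos h - 1| + |s * (Real.sin h - h)| := abs_add_le _ _
      _ ≤ h^2/2 + h^2/4 := add_le_add b1 b2
      _ = (3/4) * h^2 := by ring
  obtain ⟨k1l, k1r⟩ := abs_le.mp key1
  have hshabs : |s*h| ≤ 1/4 := by rw [abs_mul]; exact hsh
  obtain ⟨hshl, hshr⟩ := abs_le.mp hshabs
  have hu_abs : |u| ≤ 1/2 := by
    rw [abs_le]
    constructor
    · nlinarith
    · nlinarith
  obtain ⟨hul, hur⟩ := abs_le.mp hu_abs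
  have h1u : Real.cos h + s * Real.sin h = 1 + u := by rw [hu]; ring
  have h14 : (1/4:ℝ) ≤ Real.cos h + s * Real.sin h := by rw [h1u]; linarith
  refine ⟨h14, ?_⟩
  have hlog := hammer_log_lb hu_abs
  rw [h1u]
  -- u² ≤ 4 h²/ρ²
  have hsh2 : |s*h| ≤ |h| * (1/ρ) := by
    rw [abs_mul]
    calc |s| * |h| ≤ (1/ρ) * |h| := mul_le_mul_of_nonneg_right hs hh0
      _ = |h| * (1/ρ) := by ring
  have h3 : |u| ≤ 2 * |h| * (1/ρ) := by
    have t1 : |u| ≤ |s*h| + |u - s*h| := by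
      have := abs_add_le (s*h) (u - s*h)
      have e : s*h + (u - s*h) = u := by ring
      rw [e] at this; exact this
    have t2 : (3/4) * h^2 ≤ |h| * (1/ρ) := by
      have e : h^2 = |h| * |h| := by rw [← sq_abs]; ring
      rw [e]
      have : (3/4) * |h| ≤ 1/ρ := by
        have : (3/4) * |h| ≤ 1 := by nlinarith
        have h1ρ : (1:ℝ) ≤ 1/ρ := by rw [le_div_iff₀ hρ0]; nlinarith
        linarith
      nlinarith
    calc |u| ≤ |s*h| + |u - s*h| := t1
      _ ≤ |h| * (1/ρ) + (3/4) * h^2 := by linarith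
      _ ≤ 2 * |h| * (1/ρ) := by linarith
  have hu2 : u^2 ≤ 4 * h^2 * (1/ρ)^2 := by
    have := mul_self_le_mul_self (abs_nonneg u) h3
    have e1 : |u| * |u| = u^2 := by rw [← sq_abs]; ring
    have e2 : (2 * |h| * (1/ρ)) * (2 * |h| * (1/ρ)) = 4 * h^2 * (1/ρ)^2 := by
      rw [← sq_abs h]; ring
    rw [e1, e2] at this; exact this
  have hq : (3/4:ℝ) ≤ (1/ρ)^2 := by
    have h1ρ : (1:ℝ) ≤ 1/ρ := by rw [le_div_iff₀ hρ0]; nlinarith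
    nlinarith
  have hfin : s*h - (9/ρ^2)*h^2 ≤ u - 2*u^2 := by
    have e : (9/ρ^2)*h^2 = 9 * (1/ρ)^2 * h^2 := by
      field_simp
    rw [e]
    nlinarith [sq_nonneg h, mul_le_mul_of_nonneg_right hq (sq_nonneg h)]
  exact le_trans hfin hlog

private lemma hammer_lemB_aux {F F₂ s : ℝ → ℝ} {ρ : ℝ} (hρ0 : 0 < ρ) (hρ1 : ρ ≤ 1)
    (hs : ∀ x, |s x| ≤ 1/ρ)
    (hF : ∀ x h, |h| ≤ ρ/4 → F (x+h) ≤ F x - Real.log (Real.cos h + s x * Real.sin h))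
    (hF₂ : ∀ x h, |h| ≤ ρ/4 → F₂ (x+h) ≤ F₂ x - Real.log (Real.cos h + s x * Real.sin h))
    {x y : ℝ} (hxy : x < y) : F y - F₂ y ≤ F x - F₂ x := by
  set C : ℝ := 9/ρ^2 with hC
  have hCpos : 0 < C := by positivity
  apply le_of_forall_pos_le_add
  intro η hη
  have hyx : 0 < y - x := by linarith
  obtain ⟨N, hN⟩ := exists_nat_gt (max ((y - x)/(ρ/4)) ((y-x)*(2/ρ + 2*C*(y-x))/η))
  have hN1 : (y - x)/(ρ/4) < N := lt_of_le_of_lt (le_max_left _ _) hN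
  have hN2 : (y-x)*(2/ρ + 2*C*(y-x))/η < N := lt_of_le_of_lt (le_max_right _ _) hN
  have hNpos : (0:ℝ) < N := lt_trans (by positivity) hN1
  set h : ℝ := (y - x)/N with hh
  have hhpos : 0 < h := by positivity
  have hhsmall : h ≤ ρ/4 := by
    rw [hh, div_le_iff₀ hNpos]
    rw [div_lt_iff₀ (by positivity : (0:ℝ) < ρ/4)] at hN1
    linarith
  have habs : |h| ≤ ρ/4 := by rwa [abs_of_pos hhpos]
  have hNh : (N:ℝ) * h = y - x := by
    rw [hh]; field_simp
  set G : ℕ → ℝ := fun i => F (x + i*h) - F₂ (x + i*h) with hG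
  set S : ℕ → ℝ := fun i => s (x + i*h) * h with hS
  have key : ∀ i ∈ Finset.range N, G (i+1) - G i ≤ (S (i+1) - S i) + 2*C*h^2 := by
    intro i _
    have e1 : x + (i:ℝ)*h + h = x + ((i:ℕ)+1 : ℕ)*h := by push_cast; ring
    have e2 : x + (((i:ℕ)+1 : ℕ):ℝ)*h + (-h) = x + (i:ℝ)*h := by push_cast; ring
    have hFi := hF (x + (i:ℝ)*h) h habs
    rw [e1] at hFi
    have hF₂i := hF₂ (x + (((i:ℕ)+1 : ℕ):ℝ)*h) (-h) (by rwa [abs_neg])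
    rw [e2] at hF₂i
    have T1 := (hammer_lemT hρ0 hρ1 (hs (x + (i:ℝ)*h)) habs).2
    have T2 := (hammer_lemT hρ0 hρ1 (hs (x + (((i:ℕ)+1 : ℕ):ℝ)*h)) (by rwa [abs_neg] : |(-h)| ≤ ρ/4)).2
    have e3 : s (x + (((i:ℕ)+1 : ℕ):ℝ)*h) * (-h) - C*(-h)^2
        = -(S (i+1)) - C*h^2 := by rw [hS]; push_cast; ring
    rw [hG, hS]
    simp only []
    have hSi : S i = s (x + (i:ℝ)*h) * h := rfl
    -- combine
    have T1' : s (x + (i:ℝ)*h) * h - C*h^2 ≤ Real.log (Real.cos h + s (x + (i:ℝ)*h) * Real.sin h) := T1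
    have T2' : -(s (x + (((i:ℕ)+1 : ℕ):ℝ)*h) * h) - C*h^2 ≤
        Real.log (Real.cos (-h) + s (x + (((i:ℕ)+1 : ℕ):ℝ)*h) * Real.sin (-h)) := by
      have := T2
      calc -(s (x + (((i:ℕ)+1 : ℕ):ℝ)*h) * h) - C*h^2
          = s (x + (((i:ℕ)+1 : ℕ):ℝ)*h) * (-h) - C*(-h)^2 := by ring
        _ ≤ _ := T2
    push_cast at hFi hF₂i T1' T2' ⊢
    linarith
  have sum_le := Finset.sum_le_sum key
  rw [Finset.sum_range_sub G N] at sum_le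
  have rhs_eq : (∑ i ∈ Finset.range N, ((S (i+1) - S i) + 2*C*h^2))
      = (S N - S 0) + N*(2*C*h^2) := by
    rw [Finset.sum_add_distrib, Finset.sum_range_sub S N, Finset.sum_const, Finset.card_range]
    push_cast; ring
  rw [rhs_eq] at sum_le
  have exy : x + (N:ℝ)*h = y := by rw [hNh]; ring
  have hGN : G N = F y - F₂ y := by rw [hG]; simp only [exy]
  have hG0 : G 0 = F x - F₂ x := by rw [hG]; norm_num
  have hSbound : S N - S 0 ≤ 2*(1/ρ)*h := by
    rw [hS]
    simp only [exy]
    have b1 := abs_le.mp (hs y)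
    have b2 := abs_le.mp (hs (x + (0:ℕ)*h))
    push_cast at b2 ⊢
    nlinarith [hhpos.le]
  have hNh2 : (N:ℝ)*(2*C*h^2) = 2*C*(y-x)*h := by
    have : (N:ℝ)*(2*C*h^2) = 2*C*h*((N:ℝ)*h) := by ring
    rw [this, hNh]; ring
  rw [hGN, hG0, hNh2] at sum_le
  have hlast : 2*(1/ρ)*h + 2*C*(y-x)*h ≤ η := by
    have e : 2*(1/ρ)*h + 2*C*(y-x)*h = (2/ρ + 2*C*(y-x))*((y-x)/N) := by rw [hh]; ring
    rw [e]
    rw [div_lt_iff₀ hη] at hN2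
    have e2 : (2/ρ + 2*C*(y-x)) * ((y-x)/(N:ℝ)) = ((y-x) * (2/ρ + 2*C*(y-x)))/(N:ℝ) := by ring
    rw [e2, div_le_iff₀ hNpos]
    nlinarith
  linarith

set_option maxHeartbeats 2000000 in
/-- Hammer's theorem: if every chord of a convex body `K` through an interior point `O`
is a diametral chord, then `K` is centrally symmetric with center `O`. -/
theorem stmt5 {n : ℕ} (hn : 2 ≤ n) (K : Set (EuclideanSpace ℝ (Fin n)))
    (hK : IsConvexBody K) (O : EuclideanSpace ℝ (Fin n)) (hO : O ∈ interior K)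
    (hchord : ∀ p ∈ frontier K, ∀ q ∈ frontier K, p ≠ q → O ∈ segment ℝ p q →
      ∃ u : EuclideanSpace ℝ (Fin n), u ≠ 0 ∧
        (∀ z ∈ K, ⟪u, z⟫ ≤ ⟪u, p⟫) ∧ (∀ z ∈ K, ⟪u, q⟫ ≤ ⟪u, z⟫)) :
    ∀ z, z ∈ K ↔ (2 : ℝ) • O - z ∈ K := by
  obtain ⟨hKcomp, hKconv, -⟩ := hK
  have hOK : O ∈ K := interior_subset hO
  -- inner ball
  obtain ⟨ε0, hε0pos, hball⟩ := Metric.isOpen_iff.mp isOpen_interior O hO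
  set ε : ℝ := ε0/2 with hεdef
  have hεpos : 0 < ε := by positivity
  have hεK : closedBall O ε ⊆ K := by
    intro x hx
    exact interior_subset (hball (lt_of_le_of_lt (mem_closedBall.mp hx) (by rw [hεdef]; linarith)))
  -- outer ball
  obtain ⟨R0, hR0⟩ := hKcomp.isBounded.subset_closedBall O
  set R : ℝ := max R0 ε with hRdef
  have hRpos : 0 < R := lt_of_lt_of_le hεpos (le_max_right _ _)
  have hεR : ε ≤ R := le_max_right _ _
  have hKR : K ⊆ closedBall O R := fun x hx => closedBall_subset_closedBall (le_max_left _ _) (hR0 hx)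
  -- the radial function
  set T : EuclideanSpace ℝ (Fin n) → Set ℝ := fun d => {t : ℝ | O + t • d ∈ K} with hTdef
  set r : EuclideanSpace ℝ (Fin n) → ℝ := fun d => sSup (T d) with hrdef
  have hT0 : ∀ d, (0:ℝ) ∈ T d := by
    intro d; simp only [hTdef, Set.mem_setOf_eq, zero_smul, add_zero]; exact hOK
  have hTne : ∀ d, (T d).Nonempty := fun d => ⟨0, hT0 d⟩
  have hTclosed : ∀ d, IsClosed (T d) := by
    intro d
    have : Continuous (fun t : ℝ => O + t • d) := by continuity
    exact hKcomp.isClosed.preimage this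
  have hTbdd : ∀ d, ‖d‖ = 1 → BddAbove (T d) := by
    intro d hd
    refine ⟨R, fun t ht => ?_⟩
    have h1 : O + t • d ∈ closedBall O R := hKR ht
    have h2 : ‖t • d‖ ≤ R := by
      have := mem_closedBall.mp h1
      rwa [dist_eq_norm, add_sub_cancel_left] at this
    rw [norm_smul, hd, mul_one] at h2
    exact le_trans (le_abs_self t) h2
  have hTconv : ∀ d, Convex ℝ (T d) := by
    intro d t1 ht1 t2 ht2 a b ha hb hab
    have ht1' : O + t1 • d ∈ K := ht1
    have ht2' : O + t2 • d ∈ K := ht2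
    have key : O + (a*t1 + b*t2) • d = a • (O + t1 • d) + b • (O + t2 • d) := by
      match_scalars
      · linarith
      · ring
    show O + (a • t1 + b • t2) • d ∈ K
    rw [smul_eq_mul, smul_eq_mul, key]
    exact hKconv ht1' ht2' ha hb hab
  have hrmem : ∀ d, ‖d‖ = 1 → r d ∈ T d := by
    intro d hd
    exact (hTclosed d).csSup_mem (hTne d) (hTbdd d hd)
  have hrK : ∀ d, ‖d‖ = 1 → O + r d • d ∈ K := fun d hd => hrmem d hd
  have hrub : ∀ d, ‖d‖ = 1 → r d ≤ R := by
    intro d hd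
    apply csSup_le (hTne d)
    intro t ht
    have h1 : O + t • d ∈ closedBall O R := hKR ht
    have h2 : ‖t • d‖ ≤ R := by
      have := mem_closedBall.mp h1
      rwa [dist_eq_norm, add_sub_cancel_left] at this
    rw [norm_smul, hd, mul_one] at h2
    exact le_trans (le_abs_self t) h2
  have hrlb : ∀ d, ‖d‖ = 1 → ε ≤ r d := by
    intro d hd
    apply le_csSup (hTbdd d hd)
    simp only [hTdef, Set.mem_setOf_eq]
    apply hεK
    rw [mem_closedBall, dist_eq_norm, add_sub_cancel_left, norm_smul, hd, mul_one]
    rw [Real.norm_eq_abs, abs_of_pos hεpos]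
  have hrpos : ∀ d, ‖d‖ = 1 → 0 < r d := fun d hd => lt_of_lt_of_le hεpos (hrlb d hd)
  have hfront : ∀ d, ‖d‖ = 1 → O + r d • d ∈ frontier K := by
    intro d hd
    rw [hKcomp.isClosed.frontier_eq]
    refine ⟨hrK d hd, ?_⟩
    intro hint
    obtain ⟨δ, hδpos, hδ⟩ := Metric.isOpen_iff.mp isOpen_interior _ hint
    have hmem : r d + δ/2 ∈ T d := by
      simp only [hTdef, Set.mem_setOf_eq]
      apply interior_subset
      apply hδ
      rw [mem_ball, dist_eq_norm]
      have e : O + (r d + δ/2) • d - (O + r d • d) = (δ/2) • d := by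
        rw [add_smul]; abel
      rw [e, norm_smul, hd, mul_one, Real.norm_eq_abs, abs_of_pos (by positivity)]
      linarith
    have h2 : r d + δ / 2 ≤ r d := le_csSup (hTbdd d hd) hmem
    linarith
  -- chord lemma from the hypothesis
  have HG : ∀ d : EuclideanSpace ℝ (Fin n), ‖d‖ = 1 → ∃ u : EuclideanSpace ℝ (Fin n),
      ε * ‖u‖ ≤ r d * ⟪u, d⟫ ∧ u ≠ 0 ∧
      ∀ e : EuclideanSpace ℝ (Fin n), ‖e‖ = 1 →
        r e * ⟪u, e⟫ ≤ r d * ⟪u, d⟫ ∧ r (-e) * ⟪u, e⟫ ≤ r (-d) * ⟪u, d⟫ := by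
    intro d hd
    have hd' : ‖-d‖ = 1 := by rw [norm_neg]; exact hd
    set p := O + r d • d with hpdef
    set q := O + r (-d) • (-d) with hqdef
    have hp : p ∈ frontier K := hfront d hd
    have hq : q ∈ frontier K := hfront (-d) hd'
    have hrd := hrpos d hd
    have hrd' := hrpos (-d) hd'
    have hd0 : d ≠ 0 := by intro h0; rw [h0, norm_zero] at hd; norm_num at hd
    have hpq : p ≠ q := by
      intro heq
      rw [hpdef, hqdef] at heq
      have h1 : (r d + r (-d)) • d = 0 := by
        have := add_left_cancel heq
        rw [smul_neg] at this
        rw [add_smul]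
        rw [this]
        abel
      rcases smul_eq_zero.mp h1 with h2 | h2
      · linarith
      · exact hd0 h2
    have hOseg : O ∈ segment ℝ p q := by
      refine ⟨r (-d) / (r d + r (-d)), r d / (r d + r (-d)), by positivity, by positivity, ?_, ?_⟩
      · field_simp
        ring
      · rw [hpdef, hqdef]
        have hsum : r d + r (-d) ≠ 0 := by positivity
        match_scalars
        · field_simp
          ring
        · field_simp
          ring
    obtain ⟨u, hu0, hmax, hmin⟩ := hchord p hp q hq hpq hOseg
    refine ⟨u, ?_, hu0, ?_⟩
    · -- ε ‖u‖ ≤ r d ⟪u, d⟫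
      have hu' : ‖u‖ ≠ 0 := norm_ne_zero_iff.mpr hu0
      have hzK : O + ε • (‖u‖⁻¹ • u) ∈ K := by
        apply hεK
        rw [mem_closedBall, dist_eq_norm, add_sub_cancel_left, norm_smul, norm_smul]
        rw [norm_inv, norm_norm, inv_mul_cancel₀ hu', mul_one, Real.norm_eq_abs,
          abs_of_pos hεpos]
      have := hmax _ hzK
      rw [hpdef, inner_add_right, inner_add_right, real_inner_smul_right,
        real_inner_smul_right, real_inner_smul_right, real_inner_self_eq_norm_sq] at this
      have he : ε * (‖u‖⁻¹ * ‖u‖ ^ 2) = ε * ‖u‖ := by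
        field_simp
      rw [he] at this
      linarith
    · intro e he
      have he' : ‖-e‖ = 1 := by rw [norm_neg]; exact he
      constructor
      · have := hmax _ (hrK e he)
        rw [hpdef, inner_add_right, inner_add_right, real_inner_smul_right,
          real_inner_smul_right] at this
        linarith
      · have := hmin _ (hrK (-e) he')
        rw [hqdef, inner_add_right, inner_add_right, real_inner_smul_right,
          real_inner_smul_right, inner_neg_right, inner_neg_right] at this
        have h2 : r (-d) * -⟪u, d⟫ ≤ r (-e) * -⟪u, e⟫ := by linarith
        nlinarith [h2]
  -- radial symmetry
  have hsymr : ∀ d : EuclideanSpace ℝ (Fin n), ‖d‖ = 1 → r d = r (-d) := by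
    intro d hd
    have hd' : ‖-d‖ = 1 := by rw [norm_neg]; exact hd
    have hd0 : d ≠ 0 := by intro h0; rw [h0, norm_zero] at hd; norm_num at hd
    -- orthogonal unit vector
    obtain ⟨e, he1, hde⟩ : ∃ e : EuclideanSpace ℝ (Fin n), ‖e‖ = 1 ∧ ⟪d, e⟫ = 0 := by
      have hbot : (ℝ ∙ d)ᗮ ≠ ⊥ := by
        intro hbot
        have htop : (ℝ ∙ d) = ⊤ := Submodule.orthogonal_eq_bot_iff.mp hbot
        have h1 : Module.finrank ℝ (ℝ ∙ d) = 1 := finrank_span_singleton hd0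
        have h2 : Module.finrank ℝ (EuclideanSpace ℝ (Fin n)) = n := finrank_euclideanSpace_fin
        rw [htop, finrank_top] at h1
        rw [h2] at h1
        omega
      obtain ⟨x, hx, hx0⟩ := (Submodule.ne_bot_iff _).mp hbot
      have hxn : ‖x‖ ≠ 0 := norm_ne_zero_iff.mpr hx0
      refine ⟨‖x‖⁻¹ • x, ?_, ?_⟩
      · rw [norm_smul, norm_inv, norm_norm, inv_mul_cancel₀ hxn]
      · rw [real_inner_smul_right]
        have hdx : ⟪d, x⟫ = 0 :=
          (Submodule.mem_orthogonal _ x).mp hx d (Submodule.mem_span_singleton_self d)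
        rw [hdx, mul_zero]
    set D : ℝ → EuclideanSpace ℝ (Fin n) :=
      fun θ => Real.cos θ • d + Real.sin θ • e with hDdef
    have hDunit : ∀ θ, ‖D θ‖ = 1 := by
      intro θ
      have h2 : ⟪D θ, D θ⟫ = 1 := by
        simp only [hDdef]
        rw [real_inner_add_add_self, real_inner_smul_left, real_inner_smul_right,
          real_inner_smul_left, real_inner_smul_right, real_inner_smul_left,
          real_inner_smul_right, real_inner_self_eq_norm_sq, real_inner_self_eq_norm_sq,
          hd, he1, hde]
        have := Real.sin_sq_add_cos_sq θ
        nlinarith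
      have h3 := real_inner_self_eq_norm_sq (D θ)
      nlinarith [norm_nonneg (D θ), h2]
    have hDunit' : ∀ θ, ‖-(D θ)‖ = 1 := by intro θ; rw [norm_neg]; exact hDunit θ
    set ρ : ℝ := ε / R with hρdef
    have hρ0 : 0 < ρ := by positivity
    have hρ1 : ρ ≤ 1 := by rw [hρdef, div_le_one hRpos]; exact hεR
    set F : ℝ → ℝ := fun θ => Real.log (r (D θ)) with hFdef
    set F₂ : ℝ → ℝ := fun θ => Real.log (r (-(D θ))) with hF₂def
    have Hmain : ∀ θ : ℝ, ∃ sθ : ℝ, |sθ| ≤ 1/ρ ∧ ∀ h : ℝ, |h| ≤ ρ/4 →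
        F (θ+h) ≤ F θ - Real.log (Real.cos h + sθ * Real.sin h) ∧
        F₂ (θ+h) ≤ F₂ θ - Real.log (Real.cos h + sθ * Real.sin h) := by
      intro θ
      obtain ⟨u, hεu, hu0, hineq⟩ := HG (D θ) (hDunit θ)
      set A : ℝ := ⟪u, d⟫ with hAdef
      set B : ℝ := ⟪u, e⟫ with hBdef
      set c : ℝ → ℝ := fun φ => A * Real.cos φ + B * Real.sin φ with hcdef
      have hc : ∀ φ, ⟪u, D φ⟫ = c φ := by
        intro φ
        simp only [hDdef, hcdef]
        rw [inner_add_right, real_inner_smul_right, real_inner_smul_right]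
        ring
      have hkey : ∀ φ, r (D φ) * c φ ≤ r (D θ) * c θ ∧
          r (-(D φ)) * c φ ≤ r (-(D θ)) * c θ := by
        intro φ
        have := hineq (D φ) (hDunit φ)
        rw [hc φ, hc θ] at this
        exact this
      rw [hc θ] at hεu
      have hupos : 0 < ‖u‖ := norm_pos_iff.mpr hu0
      have hrθpos := hrpos (D θ) (hDunit θ)
      have hcθpos : 0 < c θ := by nlinarith [hεu, mul_pos hεpos hupos]
      set ν : ℝ := Real.sqrt (A^2 + B^2) with hνdef
      have hABpos : 0 < A^2 + B^2 := by
        rcases lt_or_eq_of_le (by positivity : (0:ℝ) ≤ A^2 + B^2) with h | h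
        · exact h
        · exfalso
          have hA : A = 0 := by nlinarith [sq_nonneg A, sq_nonneg B]
          have hB : B = 0 := by nlinarith [sq_nonneg A, sq_nonneg B]
          have : c θ = 0 := by simp only [hcdef]; rw [hA, hB]; ring
          linarith
      have hν : 0 < ν := Real.sqrt_pos.mpr hABpos
      have hν2 : ν^2 = A^2 + B^2 := Real.sq_sqrt (by positivity)
      -- a point where c equals ν
      have hφ₀ : ∃ φ₀, c φ₀ = ν := by
        set z : ℂ := ⟨A, B⟩ with hzdef
        have hz0 : z ≠ 0 := by
          intro h
          rw [Complex.ext_iff] at h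
          obtain ⟨h1, h2⟩ := h
          simp only [hzdef, Complex.zero_re, Complex.zero_im] at h1 h2
          nlinarith
        have habs : ‖z‖ = ν := by
          rw [Complex.norm_def, hνdef]
          congr 1
          simp only [hzdef, Complex.normSq_mk]
          ring
        refine ⟨Complex.arg z, ?_⟩
        simp only [hcdef]
        rw [Complex.cos_arg hz0, Complex.sin_arg, habs]
        simp only [hzdef]
        field_simp
        nlinarith [hν2]
      obtain ⟨φ₀, hφ₀⟩ := hφ₀
      have hcν : ρ * ν ≤ c θ := by
        have h1 : ε ≤ r (D φ₀) := hrlb (D φ₀) (hDunit φ₀)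
        have h2 := (hkey φ₀).1
        rw [hφ₀] at h2
        have h3 : r (D θ) ≤ R := hrub (D θ) (hDunit θ)
        have h4 : ε * ν ≤ R * c θ := by nlinarith
        rw [hρdef, div_mul_eq_mul_div, div_le_iff₀ hRpos]
        nlinarith
      set c' : ℝ := -A * Real.sin θ + B * Real.cos θ with hc'def
      have hpyth : c' ^ 2 + (c θ)^2 = ν^2 := by
        rw [hν2]
        simp only [hc'def, hcdef]
        linear_combination (A^2 + B^2) * (Real.sin_sq_add_cos_sq θ)
      have hc'le : |c'| ≤ ν := by
        by_contra hlt
        push_neg at hlt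
        have := mul_self_lt_mul_self hν.le hlt
        nlinarith [sq_abs c', sq_nonneg (c θ)]
      set sθ : ℝ := c' / c θ with hsθdef
      have hsbound : |sθ| ≤ 1/ρ := by
        rw [hsθdef, abs_div, abs_of_pos hcθpos, div_le_div_iff₀ hcθpos hρ0]
        nlinarith
      have hidentity : ∀ h : ℝ, c (θ+h) = c θ * (Real.cos h + sθ * Real.sin h) := by
        intro h
        have e1 : c (θ+h) = c θ * Real.cos h + c' * Real.sin h := by
          simp only [hcdef, hc'def]
          rw [Real.cos_add, Real.sin_add]
          ring
        rw [e1, hsθdef]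
        field_simp
      refine ⟨sθ, hsbound, ?_⟩
      intro h hh
      obtain ⟨hT1, hT2⟩ := hammer_lemT hρ0 hρ1 hsbound hh
      set t : ℝ := Real.cos h + sθ * Real.sin h with htdef
      have htpos : 0 < t := lt_of_lt_of_le (by norm_num) hT1
      have hr1 := hrpos (D (θ+h)) (hDunit (θ+h))
      have hr2 := hrpos (D θ) (hDunit θ)
      have hr1' := hrpos (-(D (θ+h))) (hDunit' (θ+h))
      have hr2' := hrpos (-(D θ)) (hDunit' θ)
      constructor
      · have hk := (hkey (θ+h)).1
        rw [hidentity h] at hk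
        have e2 : r (D (θ+h)) * (c θ * t) = (r (D (θ+h)) * t) * c θ := by ring
        rw [e2] at hk
        have hfle : r (D (θ+h)) * t ≤ r (D θ) := le_of_mul_le_mul_right hk hcθpos
        have h1 : r (D (θ+h)) ≤ r (D θ) / t := (le_div_iff₀ htpos).mpr hfle
        have h2 := Real.log_le_log hr1 h1
        rw [Real.log_div (ne_of_gt hr2) (ne_of_gt htpos)] at h2
        simp only [hFdef]
        exact h2
      · have hk := (hkey (θ+h)).2
        rw [hidentity h] at hk
        have e2 : r (-(D (θ+h))) * (c θ * t) = (r (-(D (θ+h))) * t) * c θ := by ring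
        rw [e2] at hk
        have hfle : r (-(D (θ+h))) * t ≤ r (-(D θ)) := le_of_mul_le_mul_right hk hcθpos
        have h1 : r (-(D (θ+h))) ≤ r (-(D θ)) / t := (le_div_iff₀ htpos).mpr hfle
        have h2 := Real.log_le_log hr1' h1
        rw [Real.log_div (ne_of_gt hr2') (ne_of_gt htpos)] at h2
        simp only [hF₂def]
        exact h2
    choose s hs1 hs2 using Hmain
    have hπ : (0:ℝ) < Real.pi := Real.pi_pos
    have hineq1 := hammer_lemB_aux hρ0 hρ1 hs1
      (fun x h hh => (hs2 x h hh).1) (fun x h hh => (hs2 x h hh).2) hπ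
    have hineq2 := hammer_lemB_aux hρ0 hρ1 hs1
      (fun x h hh => (hs2 x h hh).2) (fun x h hh => (hs2 x h hh).1) hπ
    have hD0 : D 0 = d := by
      simp only [hDdef, Real.cos_zero, Real.sin_zero, one_smul, zero_smul, add_zero]
    have hDπ : D Real.pi = -d := by
      simp only [hDdef, Real.cos_pi, Real.sin_pi, zero_smul, add_zero, neg_smul, one_smul]
    have hF0 : F 0 = Real.log (r d) := by simp only [hFdef, hD0]
    have hF₂0 : F₂ 0 = Real.log (r (-d)) := by simp only [hF₂def, hD0]
    have hFπ : F Real.pi = Real.log (r (-d)) := by simp only [hFdef, hDπ]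
    have hF₂π : F₂ Real.pi = Real.log (r d) := by simp only [hF₂def, hDπ, neg_neg]
    rw [hF0, hF₂0, hFπ, hF₂π] at hineq1 hineq2
    have hlogeq : Real.log (r d) = Real.log (r (-d)) := by linarith
    calc r d = Real.exp (Real.log (r d)) := (Real.exp_log (hrpos d hd)).symm
      _ = Real.exp (Real.log (r (-d))) := by rw [hlogeq]
      _ = r (-d) := Real.exp_log (hrpos (-d) hd')
  -- forward direction
  have hforward : ∀ z ∈ K, (2:ℝ) • O - z ∈ K := by
    intro z hz
    by_cases hzO : z = O
    · have : (2:ℝ) • O - z = O := by rw [hzO, two_smul]; abel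
      rw [this]; exact hOK
    · have hzO' : z - O ≠ 0 := sub_ne_zero.mpr hzO
      set t : ℝ := ‖z - O‖ with htdef
      have ht0 : 0 < t := norm_pos_iff.mpr hzO'
      set d : EuclideanSpace ℝ (Fin n) := t⁻¹ • (z - O) with hddef
      have hd1 : ‖d‖ = 1 := by
        rw [hddef, norm_smul, norm_inv, Real.norm_eq_abs, abs_of_pos ht0, htdef,
          inv_mul_cancel₀ (ne_of_gt ht0)]
      have hd1' : ‖-d‖ = 1 := by rw [norm_neg]; exact hd1
      have hzd : O + t • d = z := by
        rw [hddef, smul_smul, mul_inv_cancel₀ (ne_of_gt ht0), one_smul]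
        abel
      have htT : t ∈ T d := by
        show O + t • d ∈ K
        rw [hzd]; exact hz
      have htle : t ≤ r d := le_csSup (hTbdd d hd1) htT
      have htle' : t ≤ r (-d) := by rw [← hsymr d hd1]; exact htle
      have hmem : t ∈ T (-d) := by
        have hseg : segment ℝ (0:ℝ) (r (-d)) ⊆ T (-d) :=
          (hTconv (-d)).segment_subset (hT0 (-d)) (hrmem (-d) hd1')
        have : t ∈ Set.Icc (0:ℝ) (r (-d)) := ⟨ht0.le, htle'⟩
        rw [← segment_eq_Icc (by linarith [hrpos (-d) hd1'] : (0:ℝ) ≤ r (-d))] at this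
        exact hseg this
      have hmem' : O + t • (-d) ∈ K := hmem
      have : (2:ℝ) • O - z = O + t • (-d) := by
        rw [smul_neg, ← hzd, two_smul]
        abel
      rw [this]
      exact hmem'
  intro z
  constructor
  · exact hforward z
  · intro hz
    have := hforward _ hz
    have e : (2:ℝ) • O - ((2:ℝ) • O - z) = z := by abel
    rwa [e] at this
end
end

section
/- Let K ⊂ R^n (n ≥ 3) be a convex body such that every section of K by a hyperplane through a fixed interior point O is an (n−1)-dimensional ellipsoid. Then K is an ellipsoid. -/
open Set Metric Function Bornology
open scoped RealInnerProductSpace Pointwise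

open scoped Matrix
open scoped MatrixOrder

set_option maxHeartbeats 1000000
noncomputable section


variable {E : Type*} [NormedAddCommGroup E] [NormedSpace ℝ E]

lemma mem_iff_gauge_le_one {s : Set E} (hconv : Convex ℝ s) (hcl : IsClosed s)
    (h0 : s ∈ nhds 0) {x : E} : x ∈ s ↔ gauge s x ≤ 1 := by
  rw [gauge_le_one_iff_mem_closure hconv h0, hcl.closure_eq]

lemma gauge_pos' {s : Set E} (hb : Bornology.IsBounded s) (h0 : s ∈ nhds 0) {d : E}
    (hd : d ≠ 0) : 0 < gauge s d := by
  rw [gauge_pos (absorbent_nhds_zero h0) (NormedSpace.isVonNBounded_of_isBounded _ hb)]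
  exact hd

lemma smul_mem_iff_interval {s : Set E} (hconv : Convex ℝ s) (hcl : IsClosed s)
    (h0 : s ∈ nhds 0) (hb : Bornology.IsBounded s) {d : E} (hd : d ≠ 0) (t : ℝ) :
    t • d ∈ s ↔ (-(gauge s (-d))⁻¹ ≤ t ∧ t ≤ (gauge s d)⁻¹) := by
  have hg : 0 < gauge s d := gauge_pos' hb h0 hd
  have hh : 0 < gauge s (-d) := gauge_pos' hb h0 (neg_ne_zero.2 hd)
  rcases le_or_gt 0 t with ht | ht
  · rw [mem_iff_gauge_le_one hconv hcl h0, gauge_smul_of_nonneg ht, smul_eq_mul]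
    constructor
    · intro h
      refine ⟨le_trans (neg_nonpos.2 (inv_nonneg.2 (gauge_nonneg _))) ht, ?_⟩
      rw [← le_div_iff₀ hg] at h
      simpa [div_eq_inv_mul, one_mul] using h
    · rintro ⟨-, h⟩
      calc t * gauge s d ≤ (gauge s d)⁻¹ * gauge s d := by nlinarith
        _ = 1 := inv_mul_cancel₀ hg.ne'
  · have : t • d = (-t) • (-d) := by module
    rw [this, mem_iff_gauge_le_one hconv hcl h0, gauge_smul_of_nonneg (by linarith), smul_eq_mul]
    constructor
    · intro h
      refine ⟨?_, le_trans ht.le (by positivity)⟩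
      rw [← le_div_iff₀ hh] at h
      have : -t ≤ (gauge s (-d))⁻¹ := by simpa [div_eq_inv_mul, one_mul] using h
      linarith
    · rintro ⟨h, -⟩
      calc (-t) * gauge s (-d) ≤ (gauge s (-d))⁻¹ * gauge s (-d) := by nlinarith
        _ = 1 := inv_mul_cancel₀ hh.ne'

lemma quad_roots {α β γ g h : ℝ} (hα : 0 < α) (hγ : 0 < γ) (hg : 0 < g) (hh : 0 < h)
    (H : ∀ t : ℝ, (-h⁻¹ ≤ t ∧ t ≤ g⁻¹) ↔ α * t ^ 2 + 2 * β * t - γ ≤ 0) :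
    g * h = α / γ ∧ g - h = 2 * β / γ := by
  have hdisc : (0:ℝ) < β ^ 2 + α * γ := by nlinarith
  set s := Real.sqrt (β ^ 2 + α * γ) with hs
  have hs2 : s ^ 2 = β ^ 2 + α * γ := Real.sq_sqrt hdisc.le
  have hspos : 0 < s := Real.sqrt_pos.2 hdisc
  have hsβ : β < s ∧ -s < β := by
    constructor <;> nlinarith
  set rp := (-β + s) / α with hrp
  set rm := (-β - s) / α with hrm
  have hrppos : 0 < rp := by
    apply div_pos _ hα; linarith [hsβ.2]
  have hrmneg : rm < 0 := by
    apply div_neg_of_neg_of_pos _ hα; linarith [hsβ.1]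
  have hfact : ∀ t : ℝ, α * t ^ 2 + 2 * β * t - γ = α * (t - rp) * (t - rm) := by
    intro t
    rw [hrp, hrm]
    field_simp
    nlinarith [hs2]
  have hiff : ∀ t : ℝ, α * t ^ 2 + 2 * β * t - γ ≤ 0 ↔ (rm ≤ t ∧ t ≤ rp) := by
    intro t
    rw [hfact t]
    constructor
    · intro hle
      constructor
      · by_contra hc
        push_neg at hc
        have k1 : 0 < α * ((t - rp) * (t - rm)) :=
          mul_pos hα (mul_pos_of_neg_of_neg (by linarith) (by linarith))
        nlinarith [k1]
      · by_contra hc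
        push_neg at hc
        have k1 : 0 < α * ((t - rp) * (t - rm)) :=
          mul_pos hα (mul_pos (by linarith) (by linarith))
        nlinarith [k1]
    · rintro ⟨h1, h2⟩
      have key : 0 ≤ α * ((rp - t) * (t - rm)) :=
        mul_nonneg hα.le (mul_nonneg (by linarith) (by linarith))
      nlinarith [key]
  have hginv : 0 < g⁻¹ := inv_pos.2 hg
  have hhinv : 0 < h⁻¹ := inv_pos.2 hh
  have he1 : g⁻¹ = rp := by
    have h1 : (g⁻¹ : ℝ) ≤ rp := ((hiff _).1 ((H _).1 ⟨by linarith, le_refl _⟩)).2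
    have h2 : rp ≤ g⁻¹ := ((H _).2 ((hiff _).2 ⟨by linarith, le_refl _⟩)).2
    linarith
  have he2 : -h⁻¹ = rm := by
    have h1 : -h⁻¹ ≤ rm := ((H _).2 ((hiff _).2 ⟨le_refl _, by linarith⟩)).1
    have h2 : rm ≤ -h⁻¹ := ((hiff _).1 ((H _).1 ⟨le_refl _, by linarith⟩)).1
    linarith
  have hgv : g = rp⁻¹ := by rw [← he1, inv_inv]
  have hhv : h = -rm⁻¹ := by
    have : h⁻¹ = -rm := by linarith
    rw [← inv_inv h, this, inv_neg]
  have hprod : rp * rm = -γ / α := by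
    rw [hrp, hrm]; field_simp; nlinarith [hs2]
  have hsum : rp + rm = -2 * β / α := by
    rw [hrp, hrm]; field_simp; ring
  have hrp0 : rp ≠ 0 := hrppos.ne'
  have hrm0 : rm ≠ 0 := hrmneg.ne
  constructor
  · rw [hgv, hhv]
    have e1 : rp⁻¹ * -rm⁻¹ = -(rp * rm)⁻¹ := by rw [mul_inv]; ring
    rw [e1, hprod, neg_div, inv_neg, neg_neg, inv_div]
  · rw [hgv, hhv]
    have e2 : rp⁻¹ - -rm⁻¹ = (rp + rm) / (rp * rm) := by
      field_simp
      ring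
    rw [e2, hprod, hsum]
    rw [div_div_div_eq]
    field_simp [hα.ne', hγ.ne']

lemma exists_orthogonal {n : ℕ} (hn : 3 ≤ n) (x y : EuclideanSpace ℝ (Fin n)) :
    ∃ u : EuclideanSpace ℝ (Fin n), u ≠ 0 ∧ ⟪u, x⟫ = 0 ∧ ⟪u, y⟫ = 0 := by
  classical
  set V : Submodule ℝ (EuclideanSpace ℝ (Fin n)) := Submodule.span ℝ {x, y} with hV
  have hVle : Module.finrank ℝ V ≤ 2 := by
    refine (finrank_span_le_card ({x, y} : Set (EuclideanSpace ℝ (Fin n)))).trans ?_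
    have : ({x, y} : Set (EuclideanSpace ℝ (Fin n))).toFinset ⊆ {x, y} := by
      intro z hz
      simpa using Set.mem_toFinset.1 hz
    calc ({x, y} : Set (EuclideanSpace ℝ (Fin n))).toFinset.card
        ≤ ({x, y} : Finset (EuclideanSpace ℝ (Fin n))).card := Finset.card_le_card this
      _ ≤ 2 := Finset.card_insert_le x {y} |>.trans (by simp)
  have hVne : V ≠ ⊤ := by
    intro hVtop
    have h1 : Module.finrank ℝ (EuclideanSpace ℝ (Fin n)) = n := by
      simp [finrank_euclideanSpace_fin]
    have h2 : Module.finrank ℝ (⊤ : Submodule ℝ (EuclideanSpace ℝ (Fin n))) = n := by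
      rw [finrank_top, h1]
    rw [hVtop, h2] at hVle
    omega
  have hbot : Vᗮ ≠ ⊥ := by
    rw [Ne, Submodule.orthogonal_eq_bot_iff]
    exact hVne
  obtain ⟨u, huV, hu0⟩ := Submodule.exists_mem_ne_zero_of_ne_bot hbot
  refine ⟨u, hu0, ?_, ?_⟩
  · rw [real_inner_comm]
    exact (Submodule.mem_orthogonal V u).1 huV x (Submodule.subset_span (by simp))
  · rw [real_inner_comm]
    exact (Submodule.mem_orthogonal V u).1 huV y (Submodule.subset_span (by simp))

section KdFacts

variable {n : ℕ} {K : Set (EuclideanSpace ℝ (Fin n))} {O : EuclideanSpace ℝ (Fin n)}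

lemma Kd_convex (hKx : Convex ℝ K) : Convex ℝ ((fun d => O + d) ⁻¹' K) :=
  hKx.translate_preimage_right O

lemma Kd_closed (hKc : IsCompact K) : IsClosed ((fun d => O + d) ⁻¹' K) :=
  hKc.isClosed.preimage (continuous_const.add continuous_id)

lemma Kd_nhds (hO : O ∈ interior K) :
    ((fun d => O + d) ⁻¹' K) ∈ nhds (0 : EuclideanSpace ℝ (Fin n)) := by
  have hc : ContinuousAt (fun d : EuclideanSpace ℝ (Fin n) => O + d) 0 :=
    (continuous_const.add continuous_id).continuousAt
  have hK : K ∈ nhds ((fun d : EuclideanSpace ℝ (Fin n) => O + d) 0) := by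
    simpa using mem_interior_iff_mem_nhds.1 hO
  exact hc.preimage_mem_nhds hK

lemma Kd_bounded (hKc : IsCompact K) :
    Bornology.IsBounded ((fun d => O + d) ⁻¹' K) := by
  obtain ⟨R, hR⟩ := hKc.isBounded.exists_norm_le
  refine isBounded_iff_forall_norm_le.2 ⟨R + ‖O‖, fun d hd => ?_⟩
  have h1 : ‖O + d‖ ≤ R := hR _ hd
  calc ‖d‖ = ‖O + d - O‖ := by rw [add_sub_cancel_left]
    _ ≤ ‖O + d‖ + ‖O‖ := norm_sub_le _ _
    _ ≤ R + ‖O‖ := by linarith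

end KdFacts

lemma pair_quad {n : ℕ} (hn : 3 ≤ n) {K : Set (EuclideanSpace ℝ (Fin n))}
    (hKc : IsCompact K) (hKx : Convex ℝ K) {O : EuclideanSpace ℝ (Fin n)}
    (hO : O ∈ interior K)
    (hsec : ∀ u : EuclideanSpace ℝ (Fin n), u ≠ 0 →
      ∃ f : EuclideanSpace ℝ (Fin (n - 1)) →ᵃ[ℝ] EuclideanSpace ℝ (Fin n),
        Function.Injective f ∧ K ∩ {p | ⟪u, p - O⟫ = 0} = f '' closedBall 0 1)
    {x y : EuclideanSpace ℝ (Fin n)}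
    (hxy : ∀ a b : ℝ, a • x + b • y = 0 → a = 0 ∧ b = 0) :
    ∃ γ : ℝ, 0 < γ ∧ ∃ (y₀ w₁ w₂ : EuclideanSpace ℝ (Fin (n - 1))),
      ∀ a b : ℝ,
        gauge ((fun d => O + d) ⁻¹' K) (a • x + b • y) *
          gauge ((fun d => O + d) ⁻¹' K) (-(a • x + b • y)) = ‖a • w₁ + b • w₂‖ ^ 2 / γ ∧
        gauge ((fun d => O + d) ⁻¹' K) (a • x + b • y) -
          gauge ((fun d => O + d) ⁻¹' K) (-(a • x + b • y)) =
            2 * ⟪y₀, a • w₁ + b • w₂⟫ / γ := by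
  classical
  set Kd := (fun d => O + d) ⁻¹' K with hKdDef
  have hconv : Convex ℝ Kd := Kd_convex hKx
  have hcl : IsClosed Kd := Kd_closed hKc
  have hnh : Kd ∈ nhds (0 : EuclideanSpace ℝ (Fin n)) := Kd_nhds hO
  have hbd : Bornology.IsBounded Kd := Kd_bounded hKc
  have hx0 : x ≠ 0 := by
    intro h
    have := hxy 1 0 (by simp [h])
    exact one_ne_zero this.1
  obtain ⟨u, hu0, hux, huy⟩ := exists_orthogonal hn x y
  obtain ⟨f, hfinj, hfK⟩ := hsec u hu0
  obtain ⟨ρ, hρ, hball⟩ := Metric.isOpen_iff.1 isOpen_interior O hO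
  have hballK : Metric.ball O ρ ⊆ K := hball.trans interior_subset
  have hsect : ∀ c : EuclideanSpace ℝ (Fin n), ⟪u, c⟫ = 0 →
      (O + c ∈ K ↔ O + c ∈ f '' closedBall 0 1) := by
    intro c hc
    constructor
    · intro h
      rw [← hfK]
      refine ⟨h, ?_⟩
      simpa using hc
    · intro h
      have h2 : O + c ∈ K ∩ {p | ⟪u, p - O⟫ = 0} := hfK ▸ h
      exact h2.1
  have hOK : O ∈ f '' closedBall 0 1 := by
    have h1 : O + 0 ∈ K := by simpa using interior_subset hO
    have := (hsect 0 (inner_zero_right u)).1 h1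
    simpa using this
  obtain ⟨y₀, hy₀mem, hy₀⟩ := hOK
  have hkey : ∀ (v : EuclideanSpace ℝ (Fin (n - 1))) (c : EuclideanSpace ℝ (Fin n)),
      f.linear v = c → ⟪u, c⟫ = 0 → (O + c ∈ K ↔ ‖y₀ + v‖ ≤ 1) := by
    intro v c hv hc
    have hfv : f (y₀ + v) = O + c := by
      have h1 : f (v +ᵥ y₀) = f.linear v +ᵥ f y₀ := f.map_vadd y₀ v
      rw [vadd_eq_add, vadd_eq_add] at h1
      rw [add_comm y₀ v, h1, hv, hy₀, add_comm]
    rw [hsect c hc]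
    constructor
    · rintro ⟨z, hz, hzc⟩
      have hzeq : z = y₀ + v := hfinj (hzc.trans hfv.symm)
      rw [hzeq] at hz
      simpa using hz
    · intro h
      exact ⟨y₀ + v, by simpa using h, hfv⟩
  set ε : ℝ := ρ / (2 * (‖x‖ + ‖y‖ + 1)) with hεdef
  have hεpos : 0 < ε := by positivity
  have hmem' : ∀ d : EuclideanSpace ℝ (Fin n), ‖d‖ ≤ ‖x‖ + ‖y‖ → O + ε • d ∈ K := by
    intro d hd
    apply hballK
    rw [Metric.mem_ball, dist_eq_norm, add_sub_cancel_left, norm_smul, Real.norm_eq_abs,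
      abs_of_pos hεpos]
    have hxn : (0:ℝ) ≤ ‖x‖ := norm_nonneg x
    have hyn : (0:ℝ) ≤ ‖y‖ := norm_nonneg y
    have hdn : (0:ℝ) ≤ ‖d‖ := norm_nonneg d
    have hεle : ε * ‖d‖ ≤ ε * (‖x‖ + ‖y‖) := by nlinarith
    have : ε * (‖x‖ + ‖y‖) < ρ := by
      rw [hεdef, div_mul_eq_mul_div, div_lt_iff₀ (by positivity)]
      nlinarith
    linarith
  have hwgen : ∀ d : EuclideanSpace ℝ (Fin n), ‖d‖ ≤ ‖x‖ + ‖y‖ → ⟪u, d⟫ = 0 →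
      ∃ w : EuclideanSpace ℝ (Fin (n - 1)), f.linear w = d := by
    intro d hd hud
    have h1 : O + ε • d ∈ K := hmem' d hd
    have h2 : ⟪u, ε • d⟫ = 0 := by rw [real_inner_smul_right, hud, mul_zero]
    obtain ⟨z, hz, hzc⟩ := (hsect _ h2).1 h1
    refine ⟨ε⁻¹ • (z - y₀), ?_⟩
    have h3 : f.linear (z - y₀) = ε • d := by
      have h4 := AffineMap.linearMap_vsub f z y₀
      rw [vsub_eq_sub, vsub_eq_sub] at h4
      rw [h4, hzc, hy₀, add_sub_cancel_left]
    rw [map_smul, h3, smul_smul, inv_mul_cancel₀ hεpos.ne', one_smul]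
  obtain ⟨w₁, hw₁⟩ := hwgen x (by linarith [norm_nonneg y]) hux
  obtain ⟨w₂, hw₂⟩ := hwgen y (by linarith [norm_nonneg x]) huy
  have hw₁0 : w₁ ≠ 0 := by
    intro h
    apply hx0
    rw [← hw₁, h, map_zero]
  have hy₀lt : ‖y₀‖ < 1 := by
    have hp : ‖y₀ + ε • w₁‖ ≤ 1 := by
      refine (hkey (ε • w₁) (ε • x) ?_ ?_).1 (hmem' x (by linarith [norm_nonneg y]))
      · rw [map_smul, hw₁]
      · rw [real_inner_smul_right, hux, mul_zero]
    have hm : ‖y₀ - ε • w₁‖ ≤ 1 := by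
      have h1 : O + ε • (-x) ∈ K := by
        apply hmem'
        rw [norm_neg]
        linarith [norm_nonneg y]
      have h2 := (hkey (-(ε • w₁)) (ε • (-x)) ?_ ?_).1 h1
      · simpa [sub_eq_add_neg] using h2
      · rw [map_neg, map_smul, hw₁, smul_neg]
      · rw [real_inner_smul_right, inner_neg_right, hux]
        ring
    have hpar := parallelogram_law_with_norm ℝ y₀ (ε • w₁)
    have hεw : 0 < ‖ε • w₁‖ := norm_pos_iff.2 (smul_ne_zero hεpos.ne' hw₁0)
    nlinarith [norm_nonneg (y₀ + ε • w₁), norm_nonneg (y₀ - ε • w₁), norm_nonneg y₀]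
  set γ : ℝ := 1 - ‖y₀‖ ^ 2 with hγdef
  have hγpos : 0 < γ := by nlinarith [norm_nonneg y₀]
  refine ⟨γ, hγpos, y₀, w₁, w₂, ?_⟩
  intro a b
  by_cases hab : a = 0 ∧ b = 0
  · obtain ⟨ha, hb⟩ := hab
    simp [ha, hb, gauge_zero, inner_zero_right]
  · set d := a • x + b • y with hdDef
    have hd0 : d ≠ 0 := fun h => hab (hxy a b h)
    set w := a • w₁ + b • w₂ with hwDef
    have hTw : f.linear w = d := by rw [hwDef, map_add, map_smul, map_smul, hw₁, hw₂]
    have hw0 : w ≠ 0 := by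
      intro h
      apply hd0
      rw [← hTw, h, map_zero]
    have hud : ⟪u, d⟫ = 0 := by
      rw [hdDef, inner_add_right, real_inner_smul_right, real_inner_smul_right, hux, huy]
      ring
    have hquad : ∀ t : ℝ, t • d ∈ Kd ↔ ‖w‖ ^ 2 * t ^ 2 + 2 * ⟪y₀, w⟫ * t - γ ≤ 0 := by
      intro t
      have h1 : t • d ∈ Kd ↔ O + t • d ∈ K := Iff.rfl
      have h2 : O + t • d ∈ K ↔ ‖y₀ + t • w‖ ≤ 1 :=
        hkey (t • w) (t • d) (by rw [map_smul, hTw])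
          (by rw [real_inner_smul_right, hud, mul_zero])
      have h4 : ‖y₀ + t • w‖ ^ 2 = ‖y₀‖ ^ 2 + 2 * ⟪y₀, w⟫ * t + t ^ 2 * ‖w‖ ^ 2 := by
        rw [norm_add_sq_real, real_inner_smul_right, norm_smul, Real.norm_eq_abs, mul_pow,
          sq_abs]
        ring
      rw [h1, h2]
      constructor
      · intro h
        have h5 : ‖y₀ + t • w‖ ^ 2 ≤ 1 := by nlinarith [norm_nonneg (y₀ + t • w)]
        rw [h4] at h5
        rw [hγdef]
        nlinarith
      · intro h
        have h5 : ‖y₀ + t • w‖ ^ 2 ≤ 1 := by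
          rw [h4, hγdef] at *
          nlinarith
        nlinarith [norm_nonneg (y₀ + t • w)]
    have hint := smul_mem_iff_interval hconv hcl hnh hbd hd0
    have hg := gauge_pos' hbd hnh hd0
    have hh := gauge_pos' hbd hnh (neg_ne_zero.2 hd0)
    have hαpos : 0 < ‖w‖ ^ 2 := pow_pos (norm_pos_iff.2 hw0) 2
    exact quad_roots hαpos hγpos hg hh (fun t => ((hint t).symm.trans (hquad t)))

lemma quad_threeterm {V : Type*} [AddCommGroup V] [Module ℝ V] {Q : V → ℝ}
    (hpar : ∀ x y : V, Q (x + y) + Q (x - y) = 2 * Q x + 2 * Q y) (x y z : V) :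
    Q (x + y + z) = Q (x + z) + Q (y + z) + Q (x + y) - Q x - Q y - Q z := by
  have p1 := hpar (x + z) y
  have p2 := hpar (y + z) x
  have p3 := hpar z (x - y)
  have p4 := hpar x y
  have e1 : x + z + y = x + y + z := by abel
  have e2 : x + z - y = z + (x - y) := by abel
  have e3 : y + z + x = x + y + z := by abel
  have e4 : y + z - x = z - (x - y) := by abel
  rw [e1, e2] at p1
  rw [e3, e4] at p2
  linarith


theorem stmt14' {n : ℕ} (hn : 3 ≤ n) (K : Set (EuclideanSpace ℝ (Fin n)))
    (hK : IsCompact K ∧ Convex ℝ K ∧ (interior K).Nonempty) (O : EuclideanSpace ℝ (Fin n)) (hO : O ∈ interior K)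
    (hsec : ∀ u : EuclideanSpace ℝ (Fin n), u ≠ 0 →
      ∃ f : EuclideanSpace ℝ (Fin (n - 1)) →ᵃ[ℝ] EuclideanSpace ℝ (Fin n),
        Function.Injective f ∧ K ∩ {p | ⟪u, p - O⟫ = 0} = f '' closedBall 0 1) :
    ∃ f : EuclideanSpace ℝ (Fin n) ≃ᵃ[ℝ] EuclideanSpace ℝ (Fin n), K = f '' closedBall 0 1 := by
  classical
  obtain ⟨hKc, hKx, -⟩ := hK
  set Kd := (fun d => O + d) ⁻¹' K with hKdDef
  have hconv : Convex ℝ Kd := Kd_convex hKx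
  have hcl : IsClosed Kd := Kd_closed hKc
  have hnh : Kd ∈ nhds (0 : EuclideanSpace ℝ (Fin n)) := Kd_nhds hO
  have hbd : Bornology.IsBounded Kd := Kd_bounded hKc
  set g : EuclideanSpace ℝ (Fin n) → ℝ := gauge Kd with hgdef
  set Q : EuclideanSpace ℝ (Fin n) → ℝ := fun d => g d * g (-d) with hQdef
  set L : EuclideanSpace ℝ (Fin n) → ℝ := fun d => g d - g (-d) with hLdef
  have hmem : ∀ d, (O + d ∈ K) ↔ g d ≤ 1 := by
    intro d
    have h1 := mem_iff_gauge_le_one (s := Kd) hconv hcl hnh (x := d)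
    exact (Set.mem_preimage.symm.trans h1)
  have hgnn : ∀ d, 0 ≤ g d := fun d => gauge_nonneg d
  have hgsm : ∀ (t : ℝ), 0 ≤ t → ∀ d, g (t • d) = t * g d := by
    intro t ht d
    rw [hgdef, gauge_smul_of_nonneg ht, smul_eq_mul]
  have hgpos : ∀ d, d ≠ 0 → 0 < g d := fun d hd => gauge_pos' hbd hnh hd
  have hQnn : ∀ d, 0 ≤ Q d := fun d => mul_nonneg (hgnn d) (hgnn (-d))
  have hQpos : ∀ d, d ≠ 0 → 0 < Q d := fun d hd =>
    mul_pos (hgpos d hd) (hgpos (-d) (neg_ne_zero.2 hd))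
  have hQ0 : Q 0 = 0 := by simp [hQdef, hgdef, gauge_zero]
  have hQsm : ∀ (t : ℝ) d, Q (t • d) = t ^ 2 * Q d := by
    intro t d
    rcases le_or_gt 0 t with ht | ht
    · have e2 : -(t • d) = t • (-d) := by module
      simp only [hQdef]
      rw [e2, hgsm t ht d, hgsm t ht (-d)]
      ring
    · have e1 : t • d = (-t) • (-d) := by module
      have e2 : -(t • d) = (-t) • d := by module
      simp only [hQdef]
      rw [e2, e1, hgsm (-t) (by linarith) (-d), hgsm (-t) (by linarith) d]
      ring
  have hLsm : ∀ (t : ℝ) d, L (t • d) = t * L d := by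
    intro t d
    rcases le_or_gt 0 t with ht | ht
    · have e2 : -(t • d) = t • (-d) := by module
      simp only [hLdef]
      rw [e2, hgsm t ht d, hgsm t ht (-d)]
      ring
    · have e1 : t • d = (-t) • (-d) := by module
      have e2 : -(t • d) = (-t) • d := by module
      simp only [hLdef]
      rw [e2, e1, hgsm (-t) (by linarith) (-d), hgsm (-t) (by linarith) d]
      ring
  -- data from independent pairs
  have hpair : ∀ x y : EuclideanSpace ℝ (Fin n),
      (∀ a b : ℝ, a • x + b • y = 0 → a = 0 ∧ b = 0) →
      (Q (x + y) + Q (x - y) = 2 * Q x + 2 * Q y) ∧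
      (L (x + y) = L x + L y) ∧
      (∀ t : ℝ, Q (t • x + y) - t ^ 2 * Q x - Q y = t * (Q (x + y) - Q x - Q y)) := by
    intro x y hxy
    obtain ⟨γ, hγ, y₀, w₁, w₂, hqf⟩ := pair_quad hn hKc hKx hO hsec hxy
    have hQab : ∀ a b : ℝ, Q (a • x + b • y) = ‖a • w₁ + b • w₂‖ ^ 2 / γ :=
      fun a b => (hqf a b).1
    have hLab : ∀ a b : ℝ, L (a • x + b • y) = 2 * ⟪y₀, a • w₁ + b • w₂⟫ / γ :=
      fun a b => (hqf a b).2
    have exy : ∀ a b : ℝ, a • x + b • y = a • x + b • y := fun _ _ => rfl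
    have hQxy : Q (x + y) = ‖w₁ + w₂‖ ^ 2 / γ := by
      have := hQab 1 1; simpa using this
    have hQxmy : Q (x - y) = ‖w₁ - w₂‖ ^ 2 / γ := by
      have := hQab 1 (-1)
      have e1 : (1:ℝ) • x + (-1:ℝ) • y = x - y := by module
      have e2 : (1:ℝ) • w₁ + (-1:ℝ) • w₂ = w₁ - w₂ := by module
      rw [e1, e2] at this
      exact this
    have hQx : Q x = ‖w₁‖ ^ 2 / γ := by
      have := hQab 1 0; simpa using this
    have hQy : Q y = ‖w₂‖ ^ 2 / γ := by
      have := hQab 0 1; simpa using this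
    have hQt : ∀ t : ℝ, Q (t • x + y) = ‖t • w₁ + w₂‖ ^ 2 / γ := by
      intro t
      have := hQab t 1; simpa using this
    have hLxy : L (x + y) = 2 * ⟪y₀, w₁ + w₂⟫ / γ := by
      have := hLab 1 1; simpa using this
    have hLx : L x = 2 * ⟪y₀, w₁⟫ / γ := by
      have := hLab 1 0; simpa using this
    have hLy : L y = 2 * ⟪y₀, w₂⟫ / γ := by
      have := hLab 0 1; simpa using this
    refine ⟨?_, ?_, ?_⟩
    · rw [hQxy, hQxmy, hQx, hQy]
      have hplaw := parallelogram_law_with_norm ℝ w₁ w₂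
      field_simp
      nlinarith [hplaw]
    · rw [hLxy, hLx, hLy, inner_add_right]
      field_simp
    · intro t
      rw [hQt t, hQxy, hQx, hQy]
      have e1 : ‖t • w₁ + w₂‖ ^ 2 = t ^ 2 * ‖w₁‖ ^ 2 + 2 * t * ⟪w₁, w₂⟫ + ‖w₂‖ ^ 2 := by
        rw [norm_add_sq_real, real_inner_smul_left, norm_smul, Real.norm_eq_abs, mul_pow,
          sq_abs]
        ring
      have e2 : ‖w₁ + w₂‖ ^ 2 = ‖w₁‖ ^ 2 + 2 * ⟪w₁, w₂⟫ + ‖w₂‖ ^ 2 := by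
        rw [norm_add_sq_real]
      rw [e1, e2]
      field_simp
      ring
  have hdep : ∀ x y : EuclideanSpace ℝ (Fin n),
      ¬(∀ a b : ℝ, a • x + b • y = 0 → a = 0 ∧ b = 0) →
      (x = 0 ∨ ∃ c : ℝ, y = c • x) := by
    intro x y h
    push_neg at h
    obtain ⟨a, b, hab, hne⟩ := h
    by_cases hb : b = 0
    · have ha : a ≠ 0 := by
        intro ha0
        exact hne ha0 hb
      left
      have : a • x = 0 := by
        rw [hb] at hab
        simpa using hab
      exact (smul_eq_zero.1 this).resolve_left ha
    · right
      refine ⟨-a / b, ?_⟩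
      have h1 : b • y = -(a • x) := by
        rw [eq_neg_iff_add_eq_zero, add_comm]
        exact hab
      calc y = b⁻¹ • (b • y) := (inv_smul_smul₀ hb y).symm
        _ = (-a / b) • x := by
            rw [h1, smul_neg, smul_smul, neg_div, neg_smul, div_eq_mul_inv, mul_comm]
  have hpar : ∀ x y, Q (x + y) + Q (x - y) = 2 * Q x + 2 * Q y := by
    intro x y
    by_cases hind : ∀ a b : ℝ, a • x + b • y = 0 → a = 0 ∧ b = 0
    · exact (hpair x y hind).1
    · rcases hdep x y hind with hx | ⟨c, hc⟩
      · subst hx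
        have e1 : (0:EuclideanSpace ℝ (Fin n)) + y = y := by abel
        have e2 : (0:EuclideanSpace ℝ (Fin n)) - y = (-1 : ℝ) • y := by module
        rw [e1, e2, hQsm, hQ0]
        ring
      · subst hc
        have e1 : x + c • x = (1 + c) • x := by module
        have e2 : x - c • x = (1 - c) • x := by module
        rw [e1, e2, hQsm, hQsm, hQsm]
        ring
  have hLadd : ∀ x y, L (x + y) = L x + L y := by
    intro x y
    by_cases hind : ∀ a b : ℝ, a • x + b • y = 0 → a = 0 ∧ b = 0
    · exact (hpair x y hind).2.1
    · rcases hdep x y hind with hx | ⟨c, hc⟩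
      · subst hx
        have hL0 : L 0 = 0 := by simp [hLdef, hgdef, gauge_zero]
        rw [zero_add, hL0, zero_add]
      · subst hc
        have e1 : x + c • x = (1 + c) • x := by module
        rw [e1, hLsm, hLsm]
        ring
  -- the symmetric bilinear form B
  set B : EuclideanSpace ℝ (Fin n) → EuclideanSpace ℝ (Fin n) → ℝ :=
    fun x y => (Q (x + y) - Q x - Q y) / 2 with hBdef
  have hBsymm : ∀ x y, B x y = B y x := by
    intro x y
    simp only [hBdef]
    rw [add_comm]
    ring
  have hBxx : ∀ x, B x x = Q x := by
    intro x
    have h2 : Q (x + x) = 4 * Q x := by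
      have e : x + x = (2:ℝ) • x := by module
      rw [e, hQsm]
      ring
    simp only [hBdef, h2]
    ring
  have hBaddl : ∀ x y z, B (x + y) z = B x z + B y z := by
    intro x y z
    have h3 := quad_threeterm hpar x y z
    simp only [hBdef]
    linarith
  have hBsml : ∀ (t : ℝ) x z, B (t • x) z = t * B x z := by
    intro t x z
    by_cases hind : ∀ a b : ℝ, a • x + b • z = 0 → a = 0 ∧ b = 0
    · have h3 := (hpair x z hind).2.2 t
      have h4 : Q (t • x) = t ^ 2 * Q x := hQsm t x
      simp only [hBdef]
      rw [h4]
      linarith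
    · rcases hdep x z hind with hx | ⟨c, hc⟩
      · subst hx
        have e0 : t • (0 : EuclideanSpace ℝ (Fin n)) = 0 := smul_zero t
        simp only [hBdef, e0, zero_add, hQ0]
        ring
      · subst hc
        have e1 : t • x + c • x = (t + c) • x := by module
        have e2 : x + c • x = (1 + c) • x := by module
        simp only [hBdef]
        rw [e1, e2, hQsm, hQsm, hQsm, hQsm]
        ring
  have hBaddr : ∀ x y z, B x (y + z) = B x y + B x z := by
    intro x y z
    rw [hBsymm, hBaddl, hBsymm y x, hBsymm z x]
  have hBsmr : ∀ (t : ℝ) x z, B x (t • z) = t * B x z := by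
    intro t x z
    rw [hBsymm, hBsml, hBsymm]
  have hBexp : ∀ p q, B (p + q) (p + q) = B p p + 2 * B p q + B q q := by
    intro p q
    rw [hBaddl, hBaddr, hBaddr, hBsymm q p]
    ring
  -- the linear functional L as a vector v
  set Lmap : EuclideanSpace ℝ (Fin n) →ₗ[ℝ] ℝ :=
    { toFun := L, map_add' := hLadd, map_smul' := fun t x => by simpa using hLsm t x } with hLmap
  set v : EuclideanSpace ℝ (Fin n) :=
    (InnerProductSpace.toDual ℝ (EuclideanSpace ℝ (Fin n))).symm
      (LinearMap.toContinuousLinearMap Lmap) with hvdef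
  have hv : ∀ d, ⟪v, d⟫ = L d := by
    intro d
    rw [hvdef, InnerProductSpace.toDual_symm_apply]
    simp [hLmap]
  -- the operator M
  have hMex : ∀ x : EuclideanSpace ℝ (Fin n), ∃ m : EuclideanSpace ℝ (Fin n),
      ∀ z, ⟪m, z⟫ = B x z := by
    intro x
    refine ⟨(InnerProductSpace.toDual ℝ (EuclideanSpace ℝ (Fin n))).symm
      (LinearMap.toContinuousLinearMap
        { toFun := fun z => B x z, map_add' := hBaddr x,
          map_smul' := fun t z => by simpa using hBsmr t x z }), fun z => ?_⟩
    rw [InnerProductSpace.toDual_symm_apply]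
    simp
  choose Mfun hM using hMex
  have hMadd : ∀ x y, Mfun (x + y) = Mfun x + Mfun y := by
    intro x y
    refine ext_inner_right ℝ fun z => ?_
    rw [hM, inner_add_left, hM, hM, hBaddl]
  have hMsm : ∀ (t : ℝ) x, Mfun (t • x) = t • Mfun x := by
    intro t x
    refine ext_inner_right ℝ fun z => ?_
    rw [hM, real_inner_smul_left, hM, hBsml]
  set M : EuclideanSpace ℝ (Fin n) →ₗ[ℝ] EuclideanSpace ℝ (Fin n) :=
    { toFun := Mfun, map_add' := hMadd, map_smul' := fun t x => by simpa using hMsm t x }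
    with hMdef
  have hMapp : ∀ x z, ⟪M x, z⟫ = B x z := fun x z => hM x z
  -- matrix square root
  set A : Matrix (Fin n) (Fin n) ℝ := Matrix.toEuclideanLin.symm M with hAdef
  have hAM : Matrix.toEuclideanLin A = M := by
    rw [hAdef, LinearEquiv.apply_symm_apply]
  have hherm : A.IsHermitian := by
    rw [Matrix.isHermitian_iff_isSymmetric]
    intro p q
    rw [hAM]
    rw [hMapp, real_inner_comm, hMapp, hBsymm]
  have hpsd : A.PosSemidef := by
    refine Matrix.PosSemidef.of_dotProduct_mulVec_nonneg hherm fun x => ?_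
    have hx := hQnn ((WithLp.equiv 2 (Fin n → ℝ)).symm x)
    have h1 : star x ⬝ᵥ (A *ᵥ x) =
        ⟪(WithLp.equiv 2 (Fin n → ℝ)).symm x,
          Matrix.toEuclideanLin A ((WithLp.equiv 2 (Fin n → ℝ)).symm x)⟫ := by
      rw [Matrix.toEuclideanLin_apply]
      simp [PiLp.inner_apply, dotProduct, RCLike.inner_apply, mul_comm]
    rw [h1, hAM, real_inner_comm, hMapp, hBxx]
    exact hx
  set Rm : Matrix (Fin n) (Fin n) ℝ := CFC.sqrt A with hRmdef
  have hR2 : Rm * Rm = A := CFC.sqrt_mul_sqrt_self A hpsd.nonneg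
  have hRherm : Rmᴴ = Rm := (Matrix.nonneg_iff_posSemidef.1 (CFC.sqrt_nonneg A)).1
  set S : EuclideanSpace ℝ (Fin n) →ₗ[ℝ] EuclideanSpace ℝ (Fin n) :=
    Matrix.toEuclideanLin Rm with hSdef
  have hSS : ∀ d, S (S d) = M d := by
    intro d
    rw [← hAM, ← hR2, hSdef]
    simp only [Matrix.toEuclideanLin_apply]
    simp [Matrix.mulVec_mulVec]
  have hadj : LinearMap.adjoint S = S := by
    rw [hSdef, ← Matrix.toEuclideanLin_conjTranspose_eq_adjoint, hRherm]
  have hSnorm : ∀ d, ‖S d‖ ^ 2 = B d d := by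
    intro d
    have h1 : ⟪S d, S d⟫ = ⟪d, S (S d)⟫ := by
      have h2 := LinearMap.adjoint_inner_left S (S d) d
      rw [hadj] at h2
      exact h2
    rw [← real_inner_self_eq_norm_sq, h1, hSS, real_inner_comm, hMapp]
  -- S is bijective
  have hSker : ∀ p, S p = 0 → p = 0 := by
    intro p hp
    by_contra hne
    have h1 := hSnorm p
    rw [hp, norm_zero, hBxx] at h1
    have h2 := hQpos p hne
    simp at h1
    linarith
  have hSinj : Function.Injective S := by
    intro p q hpq
    have h1 : S (p - q) = 0 := by rw [map_sub, hpq, sub_self]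
    exact sub_eq_zero.1 (hSker _ h1)
  have hSsurj : Function.Surjective S := LinearMap.injective_iff_surjective.1 hSinj
  set Slin : EuclideanSpace ℝ (Fin n) ≃ₗ[ℝ] EuclideanSpace ℝ (Fin n) :=
    LinearEquiv.ofBijective S ⟨hSinj, hSsurj⟩ with hSlin
  have hSlinapp : ∀ p, Slin p = S p := fun p => rfl
  -- the center c
  have hMker : ∀ p, M p = 0 → p = 0 := by
    intro p hp
    by_contra hne
    have h1 := hMapp p p
    rw [hp, hBxx] at h1
    have h2 := hQpos p hne
    simp at h1
    linarith
  have hMinj : Function.Injective M := by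
    intro p q hpq
    have h1 : M (p - q) = 0 := by rw [map_sub, hpq, sub_self]
    exact sub_eq_zero.1 (hMker _ h1)
  have hMsurj : Function.Surjective M := LinearMap.injective_iff_surjective.1 hMinj
  obtain ⟨c, hcM⟩ := hMsurj ((-(1/2) : ℝ) • v)
  have hcB : ∀ dd, B c dd = -(L dd) / 2 := by
    intro dd
    rw [← hMapp, hcM, real_inner_smul_left, hv]
    ring
  set r : ℝ := Real.sqrt (1 + B c c) with hrdef
  have hBcc : 0 ≤ B c c := by rw [hBxx]; exact hQnn c
  have hr2 : r ^ 2 = 1 + B c c := Real.sq_sqrt (by linarith)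
  have hrpos : 0 < r := Real.sqrt_pos.2 (by linarith)
  -- characterisation of K as an S-ball
  have hchar : ∀ z, z ∈ K ↔ ‖S (z - O - c)‖ ≤ r := by
    intro z
    have h1 := hmem (z - O)
    rw [show O + (z - O) = z from by abel] at h1
    have h2 : g (z - O) ≤ 1 ↔ Q (z - O) + L (z - O) ≤ 1 := by
      have hb0 : 0 ≤ g (-(z - O)) := hgnn _
      have hfact : Q (z - O) + L (z - O) - 1 = (g (z - O) - 1) * (g (-(z - O)) + 1) := by
        simp only [hQdef, hLdef]
        ring
      constructor
      · intro h
        nlinarith [hfact]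
      · intro h
        nlinarith [hfact]
    have h3 : B (z - O - c) (z - O - c) = Q (z - O) + L (z - O) + B c c := by
      have e1 : z - O - c = (z - O) + (-1 : ℝ) • c := by module
      have ha : B (z - O) ((-1 : ℝ) • c) = -B c (z - O) := by
        rw [hBsmr, hBsymm]
        ring
      have hb : B ((-1 : ℝ) • c) ((-1 : ℝ) • c) = B c c := by
        rw [hBsml, hBsmr]
        ring
      rw [e1, hBexp, ha, hb, hBxx, hcB]
      ring
    rw [h1, h2]
    have h4 := hSnorm (z - O - c)
    constructor
    · intro h
      have h5 : ‖S (z - O - c)‖ ^ 2 ≤ r ^ 2 := by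
        rw [h4, h3, hr2]
        linarith
      nlinarith [norm_nonneg (S (z - O - c))]
    · intro h
      have h6 : ‖S (z - O - c)‖ ^ 2 ≤ r ^ 2 := by nlinarith [norm_nonneg (S (z - O - c))]
      rw [h4, h3, hr2] at h6
      linarith
  -- the affine equivalence
  set lsc : EuclideanSpace ℝ (Fin n) ≃ₗ[ℝ] EuclideanSpace ℝ (Fin n) :=
    LinearEquiv.smulOfNeZero ℝ _ r hrpos.ne' with hlsc
  set fe : EuclideanSpace ℝ (Fin n) ≃ᵃ[ℝ] EuclideanSpace ℝ (Fin n) :=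
    ((lsc.trans Slin.symm).toAffineEquiv).trans
      (AffineEquiv.constVAdd ℝ (EuclideanSpace ℝ (Fin n)) (O + c)) with hfe
  have hfeapp : ∀ p, fe p = O + c + Slin.symm (r • p) := by
    intro p
    simp only [hfe, AffineEquiv.trans_apply, LinearEquiv.coe_toAffineEquiv,
      LinearEquiv.trans_apply, AffineEquiv.constVAdd_apply, vadd_eq_add, hlsc,
      LinearEquiv.smulOfNeZero_apply, Units.smul_def, Units.val_mk0]
  refine ⟨fe, ?_⟩
  ext z
  rw [hchar z]
  simp only [Set.mem_image, Metric.mem_closedBall]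
  constructor
  · intro hz
    refine ⟨r⁻¹ • S (z - O - c), ?_, ?_⟩
    · rw [dist_zero_right, norm_smul, Real.norm_eq_abs, abs_of_pos (inv_pos.2 hrpos)]
      have h7 : r⁻¹ * ‖S (z - O - c)‖ ≤ r⁻¹ * r :=
        mul_le_mul_of_nonneg_left hz (inv_pos.2 hrpos).le
      rw [inv_mul_cancel₀ hrpos.ne'] at h7
      exact h7
    · rw [hfeapp]
      have e1 : r • (r⁻¹ • S (z - O - c)) = S (z - O - c) := by
        rw [smul_smul, mul_inv_cancel₀ hrpos.ne', one_smul]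
      rw [e1]
      have e2 : Slin.symm (S (z - O - c)) = z - O - c := by
        rw [← hSlinapp]
        exact Slin.symm_apply_apply _
      rw [e2]
      abel
  · rintro ⟨p, hp, rfl⟩
    rw [hfeapp]
    have e3 : O + c + Slin.symm (r • p) - O - c = Slin.symm (r • p) := by abel
    rw [e3]
    have e4 : S (Slin.symm (r • p)) = r • p := by
      rw [← hSlinapp]
      exact Slin.apply_symm_apply _
    rw [e4, norm_smul, Real.norm_eq_abs, abs_of_pos hrpos]
    rw [dist_zero_right] at hp
    nlinarith

/-- Busemann 16.12: if every section of a convex body `K` by a hyperplane through a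
fixed interior point `O` is an (n-1)-dimensional ellipsoid, then `K` is an ellipsoid. -/
theorem stmt14 {n : ℕ} (hn : 3 ≤ n) (K : Set (EuclideanSpace ℝ (Fin n)))
    (hK : IsConvexBody K) (O : EuclideanSpace ℝ (Fin n)) (hO : O ∈ interior K)
    (hsec : ∀ u : EuclideanSpace ℝ (Fin n), u ≠ 0 →
      ∃ f : EuclideanSpace ℝ (Fin (n - 1)) →ᵃ[ℝ] EuclideanSpace ℝ (Fin n),
        Function.Injective f ∧ K ∩ {p | ⟪u, p - O⟫ = 0} = f '' closedBall 0 1) :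
    IsEllipsoid K :=
  stmt14' hn K hK O hO hsec
end
end
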